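/- arXiv:1107.5495 — 6 statements merged into one kernel-verified Lean document; each statement's English description precedes it below -/
import Mathlib

section
/- Let n be a positive integer, let b_1, …, b_n be nonzero complex numbers with b_{n+1-i} equal to the complex conjugate of b_i for all i = 1, …, n, and let z_1, …, z_n be distinct complex numbers of absolute value 1, none equal to 1, with z_{n+1-i} equal to the complex conjugate of z_i for all i = 1, …, n. Then the sums s_k = ∑_{j=1}^n b_j z_j^k are real for every positive integer k, and liminf_{k→∞} s_k ≤ −(∑_{j=1}^n |b_j|²)/(∑_{j=1}^n |b_j|). -/
open Complex Filter Finset ComplexConjugate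

private lemma cesaro_ne_one {w : ℂ} (hw : ‖w‖ = 1) (h1 : w ≠ 1) :
    Filter.Tendsto (fun N : ℕ => (N : ℂ)⁻¹ * ∑ k ∈ Finset.range N, w ^ (k + 1)) Filter.atTop
      (nhds 0) := by
  apply squeeze_zero_norm (a := fun N : ℕ => (2 / ‖w - 1‖) * (N : ℝ)⁻¹)
  · intro N
    have hw1 : (0:ℝ) < ‖w - 1‖ := by
      have : w - 1 ≠ 0 := sub_ne_zero.mpr h1
      simpa [AbsoluteValue.pos_iff] using this
    have hsum : ∑ k ∈ Finset.range N, w ^ (k + 1) = (w ^ N - 1) / (w - 1) * w := by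
      rw [← geom_sum_eq h1, Finset.sum_mul]
      exact Finset.sum_congr rfl fun k _ => (pow_succ w k).symm
    have h2 : ‖w ^ N - 1‖ ≤ 2 := by
      calc ‖w ^ N - 1‖ ≤ ‖w ^ N‖ + ‖(1:ℂ)‖ := norm_sub_le _ _
        _ = 2 := by rw [norm_pow, hw]; norm_num
    rw [norm_mul, hsum, norm_mul, norm_div]
    have hwn : ‖w‖ = 1 := by rw [hw]
    have hNn : ‖(N:ℂ)⁻¹‖ = (N:ℝ)⁻¹ := by
      rw [norm_inv, Complex.norm_natCast]
    rw [hwn, mul_one, hNn]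
    rw [mul_comm]
    gcongr
  · simpa using tendsto_const_nhds.mul (tendsto_inv_atTop_nhds_zero_nat (𝕜 := ℝ))

private lemma cesaro_full {w : ℂ} (hw : ‖w‖ = 1) :
    Filter.Tendsto (fun N : ℕ => (N : ℂ)⁻¹ * ∑ k ∈ Finset.range N, w ^ (k + 1)) Filter.atTop
      (nhds (if w = 1 then 1 else 0)) := by
  split_ifs with h
  · subst h
    have : Filter.Tendsto (fun _ : ℕ => (1:ℂ)) Filter.atTop (nhds 1) := tendsto_const_nhds
    apply this.congr'
    filter_upwards [eventually_ge_atTop 1] with N hN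
    have hN0 : (N:ℂ) ≠ 0 := Nat.cast_ne_zero.mpr (by omega)
    simp only [one_pow, Finset.sum_const, Finset.card_range, nsmul_eq_mul, mul_one]
    rw [inv_mul_cancel₀ hN0]
  · exact cesaro_ne_one hw h

/-- **Theorem 1 (Beukers–Tijdeman).**
Let `n ≥ 1`, let `b 1, …, b n` be nonzero complex numbers with
`b (n+1-i) = conj (b i)` for all `i = 1, …, n`, and let `z 1, …, z n` be distinct
complex numbers of absolute value `1`, none equal to `1`, with
`z (n+1-i) = conj (z i)`.  Then each power sum `∑ j, b j * z j ^ k` is real, and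
`liminf_{k→∞} ∑ j, b j * z j ^ k ≤ -(∑ j |b j|²)/(∑ j |b j|)`. -/
theorem one_sided_power_sum_general
    (n : ℕ) (hn : 1 ≤ n) (b z : ℕ → ℂ)
    (hb0 : ∀ i ∈ Finset.Icc 1 n, b i ≠ 0)
    (hbconj : ∀ i ∈ Finset.Icc 1 n, b (n + 1 - i) = conj (b i))
    (hzabs : ∀ i ∈ Finset.Icc 1 n, ‖z i‖ = 1)
    (hz1 : ∀ i ∈ Finset.Icc 1 n, z i ≠ 1)
    (hzdist : Set.InjOn z (Set.Icc 1 n))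
    (hzconj : ∀ i ∈ Finset.Icc 1 n, z (n + 1 - i) = conj (z i)) :
    (∀ k : ℕ, 1 ≤ k → (∑ j ∈ Finset.Icc 1 n, b j * z j ^ k).im = 0) ∧
      Filter.liminf (fun k : ℕ => (∑ j ∈ Finset.Icc 1 n, b j * z j ^ k).re) Filter.atTop ≤
        -(∑ j ∈ Finset.Icc 1 n, ‖b j‖ ^ 2) /
          (∑ j ∈ Finset.Icc 1 n, ‖b j‖) := by
  classical
  have h1n : (1 : ℕ) ∈ Finset.Icc 1 n := Finset.mem_Icc.mpr ⟨le_refl 1, hn⟩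
  -- realness of the power sums
  have hconjsum : ∀ k : ℕ, (starRingEnd ℂ) (∑ j ∈ Finset.Icc 1 n, b j * z j ^ k)
      = ∑ j ∈ Finset.Icc 1 n, b j * z j ^ k := by
    intro k
    rw [map_sum]
    refine Finset.sum_nbij' (fun j => n + 1 - j) (fun j => n + 1 - j) ?_ ?_ ?_ ?_ ?_
    · intro a ha; rw [Finset.mem_Icc] at ha; rw [Finset.mem_Icc]; omega
    · intro a ha; rw [Finset.mem_Icc] at ha; rw [Finset.mem_Icc]; omega
    · intro a ha; rw [Finset.mem_Icc] at ha; omega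
    · intro a ha; rw [Finset.mem_Icc] at ha; omega
    · intro a ha
      rw [hbconj a ha, hzconj a ha, map_mul, map_pow]
  have him : ∀ k : ℕ, (∑ j ∈ Finset.Icc 1 n, b j * z j ^ k).im = 0 :=
    fun k => Complex.conj_eq_iff_im.mp (hconjsum k)
  refine ⟨fun k _ => him k, ?_⟩
  set r : ℕ → ℝ := fun k : ℕ => (∑ j ∈ Finset.Icc 1 n, b j * z j ^ k).re with hr
  set B1 : ℝ := ∑ j ∈ Finset.Icc 1 n, ‖b j‖ with hB1
  set B2 : ℝ := ∑ j ∈ Finset.Icc 1 n, ‖b j‖ ^ 2 with hB2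
  have hB1pos : 0 < B1 := by
    refine Finset.sum_pos' (fun i _ => norm_nonneg _) ⟨1, h1n, ?_⟩
    simpa [AbsoluteValue.pos_iff] using hb0 1 h1n
  have hB1ne : B1 ≠ 0 := ne_of_gt hB1pos
  -- uniform bound on r
  have hbound : ∀ k : ℕ, |r k| ≤ B1 := by
    intro k
    have h1 : |r k| ≤ ‖∑ j ∈ Finset.Icc 1 n, b j * z j ^ k‖ :=
      Complex.abs_re_le_norm _
    have h2 : ‖∑ j ∈ Finset.Icc 1 n, b j * z j ^ k‖
        ≤ ∑ j ∈ Finset.Icc 1 n, ‖b j * z j ^ k‖ := by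
      exact
        norm_sum_le (Finset.Icc 1 n) (fun j => b j * z j ^ k)
    have h3 : ∑ j ∈ Finset.Icc 1 n, ‖b j * z j ^ k‖ = B1 :=
      Finset.sum_congr rfl fun j hj => by
        rw [norm_mul, norm_pow, hzabs j hj, one_pow, mul_one]
    linarith
  -- Cesàro average of r tends to 0
  have hAc : Filter.Tendsto
      (fun N : ℕ => (N : ℂ)⁻¹ * ∑ k ∈ Finset.range N, ∑ j ∈ Finset.Icc 1 n, b j * z j ^ (k + 1))
      Filter.atTop (nhds 0) := by
    have h0 : Filter.Tendsto
        (fun N : ℕ => ∑ j ∈ Finset.Icc 1 n, b j * ((N : ℂ)⁻¹ * ∑ k ∈ Finset.range N, z j ^ (k + 1)))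
        Filter.atTop (nhds (∑ j ∈ Finset.Icc 1 n, b j * 0)) :=
      tendsto_finset_sum _ fun j hj => (cesaro_ne_one (hzabs j hj) (hz1 j hj)).const_mul (b j)
    simp only [mul_zero, Finset.sum_const_zero] at h0
    refine h0.congr fun N => ?_
    calc ∑ j ∈ Finset.Icc 1 n, b j * ((N : ℂ)⁻¹ * ∑ k ∈ Finset.range N, z j ^ (k + 1))
        = ∑ j ∈ Finset.Icc 1 n, (N : ℂ)⁻¹ * ∑ k ∈ Finset.range N, b j * z j ^ (k + 1) := by
          refine Finset.sum_congr rfl fun j _ => ?_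
          rw [← Finset.mul_sum]; ring
      _ = (N : ℂ)⁻¹ * ∑ j ∈ Finset.Icc 1 n, ∑ k ∈ Finset.range N, b j * z j ^ (k + 1) := by
          rw [Finset.mul_sum]
      _ = (N : ℂ)⁻¹ * ∑ k ∈ Finset.range N, ∑ j ∈ Finset.Icc 1 n, b j * z j ^ (k + 1) := by
          rw [Finset.sum_comm]
  have hAr : Filter.Tendsto
      (fun N : ℕ => (N : ℝ)⁻¹ * ∑ k ∈ Finset.range N, r (k + 1)) Filter.atTop (nhds 0) := by
    have h0 := (Complex.continuous_re.tendsto (0 : ℂ)).comp hAc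
    simp only [Complex.zero_re] at h0
    refine h0.congr fun N => ?_
    have hc : (N : ℂ)⁻¹ = (((N : ℝ)⁻¹ : ℝ) : ℂ) := by push_cast; ring
    simp only [Function.comp_apply, hc, Complex.re_ofReal_mul, Complex.re_sum, hr]
  -- Cesàro average of r² tends to B2
  have hexp : ∀ k : ℕ, (∑ j ∈ Finset.Icc 1 n, b j * z j ^ k) *
      (starRingEnd ℂ) (∑ j ∈ Finset.Icc 1 n, b j * z j ^ k)
      = ∑ j ∈ Finset.Icc 1 n, ∑ l ∈ Finset.Icc 1 n,
          (b j * (starRingEnd ℂ) (b l)) * (z j * (starRingEnd ℂ) (z l)) ^ k := by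
    intro k
    rw [map_sum, Finset.sum_mul_sum]
    refine Finset.sum_congr rfl fun j _ => Finset.sum_congr rfl fun l _ => ?_
    rw [map_mul, map_pow, mul_pow]; ring
  have hmc : ∀ j ∈ Finset.Icc 1 n, ∀ l ∈ Finset.Icc 1 n,
      (z j * (starRingEnd ℂ) (z l) = 1 ↔ j = l) := by
    intro j hj l hl
    constructor
    · intro h
      have h2 : z l * (starRingEnd ℂ) (z l) = 1 := by
        rw [Complex.mul_conj, Complex.normSq_eq_norm_sq, hzabs l hl]; norm_num
      have hc0 : (starRingEnd ℂ) (z l) ≠ 0 := by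
        intro h0
        rw [h0, mul_zero] at h2
        exact zero_ne_one h2
      have hz : z j = z l := mul_right_cancel₀ hc0 (h.trans h2.symm)
      exact hzdist (Set.mem_Icc.mpr (Finset.mem_Icc.mp hj)) (Set.mem_Icc.mpr (Finset.mem_Icc.mp hl)) hz
    · rintro rfl
      rw [Complex.mul_conj, Complex.normSq_eq_norm_sq, hzabs j hj]; norm_num
  have hQc : Filter.Tendsto
      (fun N : ℕ => (N : ℂ)⁻¹ * ∑ k ∈ Finset.range N,
        ((∑ j ∈ Finset.Icc 1 n, b j * z j ^ (k + 1)) *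
          (starRingEnd ℂ) (∑ j ∈ Finset.Icc 1 n, b j * z j ^ (k + 1))))
      Filter.atTop (nhds ((B2 : ℝ) : ℂ)) := by
    have h0 : Filter.Tendsto
        (fun N : ℕ => ∑ j ∈ Finset.Icc 1 n, ∑ l ∈ Finset.Icc 1 n,
          (b j * (starRingEnd ℂ) (b l)) *
            ((N : ℂ)⁻¹ * ∑ k ∈ Finset.range N, (z j * (starRingEnd ℂ) (z l)) ^ (k + 1)))
        Filter.atTop (nhds (∑ j ∈ Finset.Icc 1 n, ∑ l ∈ Finset.Icc 1 n,
          (b j * (starRingEnd ℂ) (b l)) *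
            (if z j * (starRingEnd ℂ) (z l) = 1 then 1 else 0))) := by
      refine tendsto_finset_sum _ fun j hj => tendsto_finset_sum _ fun l hl => ?_
      refine Filter.Tendsto.const_mul _ (cesaro_full ?_)
      rw [norm_mul, Complex.norm_conj, hzabs j hj, hzabs l hl, mul_one]
    have hlim : (∑ j ∈ Finset.Icc 1 n, ∑ l ∈ Finset.Icc 1 n,
        (b j * (starRingEnd ℂ) (b l)) *
          (if z j * (starRingEnd ℂ) (z l) = 1 then 1 else 0)) = ((B2 : ℝ) : ℂ) := by
      have hinner : ∀ j ∈ Finset.Icc 1 n, (∑ l ∈ Finset.Icc 1 n,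
          (b j * (starRingEnd ℂ) (b l)) *
            (if z j * (starRingEnd ℂ) (z l) = 1 then 1 else 0)) = b j * (starRingEnd ℂ) (b j) := by
        intro j hj
        have e1 : ∀ l ∈ Finset.Icc 1 n, (b j * (starRingEnd ℂ) (b l)) *
            (if z j * (starRingEnd ℂ) (z l) = 1 then 1 else 0)
            = if j = l then b j * (starRingEnd ℂ) (b l) else 0 := by
          intro l hl
          rw [if_congr (hmc j hj l hl) rfl rfl, mul_ite, mul_one, mul_zero]
        rw [Finset.sum_congr rfl e1, Finset.sum_ite_eq, if_pos hj]
      rw [Finset.sum_congr rfl hinner, hB2]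
      push_cast
      refine Finset.sum_congr rfl fun j _ => ?_
      rw [Complex.mul_conj, Complex.normSq_eq_norm_sq]
      push_cast
      ring
    rw [hlim] at h0
    refine h0.congr fun N => ?_
    calc ∑ j ∈ Finset.Icc 1 n, ∑ l ∈ Finset.Icc 1 n,
          (b j * (starRingEnd ℂ) (b l)) *
            ((N : ℂ)⁻¹ * ∑ k ∈ Finset.range N, (z j * (starRingEnd ℂ) (z l)) ^ (k + 1))
        = ∑ j ∈ Finset.Icc 1 n, ∑ l ∈ Finset.Icc 1 n, (N : ℂ)⁻¹ *
            ∑ k ∈ Finset.range N, (b j * (starRingEnd ℂ) (b l)) *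
              (z j * (starRingEnd ℂ) (z l)) ^ (k + 1) := by
          refine Finset.sum_congr rfl fun j _ => Finset.sum_congr rfl fun l _ => ?_
          rw [← Finset.mul_sum]; ring
      _ = (N : ℂ)⁻¹ * ∑ j ∈ Finset.Icc 1 n, ∑ l ∈ Finset.Icc 1 n,
            ∑ k ∈ Finset.range N, (b j * (starRingEnd ℂ) (b l)) *
              (z j * (starRingEnd ℂ) (z l)) ^ (k + 1) := by
          rw [Finset.mul_sum]
          exact Finset.sum_congr rfl fun j _ => (Finset.mul_sum _ _ _).symm
      _ = (N : ℂ)⁻¹ * ∑ k ∈ Finset.range N, ∑ j ∈ Finset.Icc 1 n, ∑ l ∈ Finset.Icc 1 n,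
            (b j * (starRingEnd ℂ) (b l)) * (z j * (starRingEnd ℂ) (z l)) ^ (k + 1) := by
          congr 1
          rw [Finset.sum_congr rfl fun j (_ : j ∈ Finset.Icc 1 n) => Finset.sum_comm]
          exact Finset.sum_comm
      _ = (N : ℂ)⁻¹ * ∑ k ∈ Finset.range N,
            ((∑ j ∈ Finset.Icc 1 n, b j * z j ^ (k + 1)) *
              (starRingEnd ℂ) (∑ j ∈ Finset.Icc 1 n, b j * z j ^ (k + 1))) := by
          exact congrArg _ (Finset.sum_congr rfl fun k _ => (hexp (k + 1)).symm)
  have hQr : Filter.Tendsto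
      (fun N : ℕ => (N : ℝ)⁻¹ * ∑ k ∈ Finset.range N, (r (k + 1)) ^ 2)
      Filter.atTop (nhds B2) := by
    have h0 := (Complex.continuous_re.tendsto ((B2 : ℝ) : ℂ)).comp hQc
    simp only [Complex.ofReal_re] at h0
    refine h0.congr fun N => ?_
    have hc : (N : ℂ)⁻¹ = (((N : ℝ)⁻¹ : ℝ) : ℂ) := by push_cast; ring
    simp only [Function.comp_apply, hc, Complex.re_ofReal_mul, Complex.re_sum]
    congr 1
    refine Finset.sum_congr rfl fun k _ => ?_
    rw [Complex.mul_conj, Complex.ofReal_re, Complex.normSq_apply, him (k + 1)]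
    simp [hr]
    ring
  -- limits of the weighted averages
  have hf : Filter.Tendsto
      (fun N : ℕ => (N : ℝ)⁻¹ * ∑ k ∈ Finset.range N, (r (k + 1) - (r (k + 1)) ^ 2 / B1))
      Filter.atTop (nhds (0 - B2 / B1)) := by
    have h0 := hAr.sub (hQr.div_const B1)
    refine h0.congr fun N => ?_
    rw [Finset.sum_sub_distrib, ← Finset.sum_div]
    ring
  have hone : Filter.Tendsto (fun N : ℕ => (N : ℝ)⁻¹ * (N : ℝ)) Filter.atTop (nhds 1) := by
    have : Filter.Tendsto (fun _ : ℕ => (1 : ℝ)) Filter.atTop (nhds 1) := tendsto_const_nhds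
    refine this.congr' ?_
    filter_upwards [Filter.eventually_ge_atTop 1] with N hN
    have hN0 : (N : ℝ) ≠ 0 := Nat.cast_ne_zero.mpr (by omega)
    rw [inv_mul_cancel₀ hN0]
  have hg : Filter.Tendsto
      (fun N : ℕ => (N : ℝ)⁻¹ * ∑ k ∈ Finset.range N, (1 - r (k + 1) / B1))
      Filter.atTop (nhds 1) := by
    have h0 := hone.sub (hAr.div_const B1)
    have heq : (1 : ℝ) - 0 / B1 = 1 := by ring
    rw [heq] at h0
    refine h0.congr fun N => ?_
    rw [Finset.sum_sub_distrib, ← Finset.sum_div, Finset.sum_const, Finset.card_range,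
      nsmul_eq_mul, mul_one]
    ring
  -- the liminf argument
  by_contra hcon
  push_neg at hcon
  set C : ℝ := -B2 / B1 with hC
  set L : ℝ := Filter.liminf r Filter.atTop with hL
  have hCL : C < L := hcon
  set m : ℝ := (C + L) / 2 with hm
  have hCm : C < m := by rw [hm]; linarith
  have hmL : m < L := by rw [hm]; linarith
  have hco : Filter.IsBoundedUnder (· ≥ ·) Filter.atTop r :=
    Filter.isBoundedUnder_of ⟨-B1, fun k => (abs_le.mp (hbound k)).1⟩
  have hev : ∀ᶠ k in Filter.atTop, m < r k := Filter.eventually_lt_of_lt_liminf hmL hco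
  obtain ⟨K, hK⟩ := Filter.eventually_atTop.mp hev
  set c : ℝ := 2 * B1 + 2 * |m| with hc
  have hc0 : 0 ≤ c := by
    have := abs_nonneg m
    rw [hc]; linarith
  have hw0 : ∀ k : ℕ, 0 ≤ 1 - r k / B1 := by
    intro k
    have := (abs_le.mp (hbound k)).2
    rw [sub_nonneg, div_le_one hB1pos]
    exact this
  have hterm2 : ∀ k : ℕ, -c ≤ (r (k + 1) - m) * (1 - r (k + 1) / B1) := by
    intro k
    have h1 := abs_le.mp (hbound (k + 1))
    have h2 : 1 - r (k + 1) / B1 ≤ 2 := by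
      have : -B1 ≤ r (k + 1) := h1.1
      have h3 : -1 ≤ r (k + 1) / B1 := by
        rw [neg_le, ← neg_div]
        exact (div_le_one hB1pos).mpr (by linarith)
      linarith
    have h4 := hw0 (k + 1)
    have h5 : -|m| ≤ m := neg_abs_le m
    have h6 : m ≤ |m| := le_abs_self m
    rw [hc]
    nlinarith [h1.1, h1.2]
  have hsum : ∀ N : ℕ, -((K : ℝ) * c) ≤
      ∑ k ∈ Finset.range N, (r (k + 1) - m) * (1 - r (k + 1) / B1) := by
    intro N
    have step : ∀ k ∈ Finset.range N,
        (if k + 1 < K then -c else 0) ≤ (r (k + 1) - m) * (1 - r (k + 1) / B1) := by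
      intro k _
      split_ifs with h
      · exact hterm2 k
      · exact mul_nonneg (by linarith [hK (k + 1) (by omega)]) (hw0 (k + 1))
    have hsub : (Finset.range N).filter (fun k => k + 1 < K) ⊆ Finset.range K := by
      intro k hk
      simp only [Finset.mem_filter, Finset.mem_range] at hk ⊢
      omega
    have hb1 : ∑ k ∈ Finset.range N, (if k + 1 < K then -c else 0)
        = -∑ k ∈ Finset.range N, (if k + 1 < K then c else 0) := by
      rw [← Finset.sum_neg_distrib]
      exact Finset.sum_congr rfl fun k _ => by split_ifs <;> simp
    have hb2 : ∑ k ∈ Finset.range N, (if k + 1 < K then c else 0) ≤ (K : ℝ) * c := by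
      calc ∑ k ∈ Finset.range N, (if k + 1 < K then c else 0)
          = ∑ k ∈ (Finset.range N).filter (fun k => k + 1 < K), c := (Finset.sum_filter _ _).symm
        _ ≤ ∑ k ∈ Finset.range K, c :=
            Finset.sum_le_sum_of_subset_of_nonneg hsub (fun _ _ _ => hc0)
        _ = (K : ℝ) * c := by rw [Finset.sum_const, Finset.card_range, nsmul_eq_mul]
    calc -((K : ℝ) * c) ≤ ∑ k ∈ Finset.range N, (if k + 1 < K then -c else 0) := by
          rw [hb1]; linarith
      _ ≤ _ := Finset.sum_le_sum step
  have hdiff : Filter.Tendsto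
      (fun N : ℕ => (N : ℝ)⁻¹ * ∑ k ∈ Finset.range N, (r (k + 1) - m) * (1 - r (k + 1) / B1))
      Filter.atTop (nhds (C - m)) := by
    have h0 := hf.sub (hg.const_mul m)
    have heq : (0 - B2 / B1) - m * 1 = C - m := by rw [hC]; ring
    rw [heq] at h0
    refine h0.congr fun N => ?_
    simp only [Finset.mul_sum]
    rw [← Finset.sum_sub_distrib]
    exact Finset.sum_congr rfl fun k _ => by ring
  have hzero : Filter.Tendsto (fun N : ℕ => -((K : ℝ) * c) * (N : ℝ)⁻¹)
      Filter.atTop (nhds 0) := by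
    have h : Filter.Tendsto (fun N : ℕ => -((K : ℝ) * c) * (N : ℝ)⁻¹) Filter.atTop
        (nhds (-((K : ℝ) * c) * 0)) :=
      Filter.Tendsto.mul tendsto_const_nhds tendsto_inv_atTop_nhds_zero_nat
    simpa using h
  have hle : (0 : ℝ) ≤ C - m := by
    refine le_of_tendsto_of_tendsto' hzero hdiff fun N => ?_
    have hN : (0 : ℝ) ≤ (N : ℝ)⁻¹ := by positivity
    calc -((K : ℝ) * c) * (N : ℝ)⁻¹ = (N : ℝ)⁻¹ * -((K : ℝ) * c) := by ring
      _ ≤ (N : ℝ)⁻¹ * ∑ k ∈ Finset.range N, (r (k + 1) - m) * (1 - r (k + 1) / B1) :=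
          mul_le_mul_of_nonneg_left (hsum N) hN
  linarith
end

section
/- Let n be a positive integer, let b_1, …, b_n be positive real numbers with b_{n+1-i} = b_i for all i = 1, …, n, and let z_1, …, z_n be complex numbers (not necessarily distinct) of absolute value 1, none equal to 1, with z_{n+1-i} equal to the complex conjugate of z_i for all i = 1, …, n. Then liminf_{k→∞} ∑_{j=1}^n b_j z_j^k ≤ −(∑_{j=1}^n b_j²)/(∑_{j=1}^n b_j). -/
open Complex Filter Finset ComplexConjugate


private lemma bt_mul_conj_eq_one {u v : ℂ} (hv : ‖v‖ = 1) : u * conj v = 1 ↔ u = v := by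
  have hvc : v * conj v = 1 := by rw [Complex.mul_conj, ← Complex.sq_norm, hv]; norm_num
  constructor
  · intro h
    have := congrArg (· * v) h
    simp only [one_mul] at this
    rw [mul_assoc, mul_comm (conj v) v, hvc, mul_one] at this
    exact this
  · rintro rfl; exact hvc

private lemma bt_cesaro_pow (w : ℂ) (hw : ‖w‖ = 1) :
    Tendsto (fun N : ℕ => (∑ k ∈ Finset.range N, w ^ k) / (N : ℂ)) atTop
      (nhds (if w = 1 then 1 else 0)) := by
  by_cases h1 : w = 1
  · simp only [h1, one_pow, Finset.sum_const, Finset.card_range, nsmul_eq_mul, mul_one, if_pos]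
    have he : (fun N : ℕ => (N : ℂ) / (N : ℂ)) =ᶠ[atTop] fun _ => 1 := by
      filter_upwards [eventually_ge_atTop 1] with N hN
      rw [div_self]
      exact_mod_cast (Nat.one_le_iff_ne_zero.mp hN)
    exact Tendsto.congr' he.symm tendsto_const_nhds
  · simp only [if_neg h1]
    rw [tendsto_zero_iff_norm_tendsto_zero]
    have hb : ∀ N : ℕ, ‖(∑ k ∈ Finset.range N, w ^ k) / (N : ℂ)‖ ≤ (2 / ‖w - 1‖) / N := by
      intro N
      rw [norm_div, Complex.norm_natCast, geom_sum_eq h1, norm_div]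
      gcongr
      calc ‖w ^ N - 1‖ ≤ ‖w ^ N‖ + ‖(1:ℂ)‖ := norm_sub_le _ _
      _ = 2 := by rw [norm_pow]; norm_num [hw]
    exact squeeze_zero (fun N => norm_nonneg _) hb
      (tendsto_const_div_atTop_nhds_zero_nat _)

/-- **Theorem 2 (Beukers–Tijdeman).**
Let `n ≥ 1`, let `b 1, …, b n` be positive real numbers with `b (n+1-i) = b i`, and
let `z 1, …, z n` be (not necessarily distinct) complex numbers of absolute value `1`,
none equal to `1`, with `z (n+1-i) = conj (z i)`.  Then
`liminf_{k→∞} ∑ j, b j * z j ^ k ≤ -(∑ j b j ^ 2)/(∑ j b j)`. -/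
theorem one_sided_power_sum_positive_coeffs
    (n : ℕ) (hn : 1 ≤ n) (b : ℕ → ℝ) (z : ℕ → ℂ)
    (hb0 : ∀ i ∈ Finset.Icc 1 n, 0 < b i)
    (hbconj : ∀ i ∈ Finset.Icc 1 n, b (n + 1 - i) = b i)
    (hzabs : ∀ i ∈ Finset.Icc 1 n, ‖z i‖ = 1)
    (hz1 : ∀ i ∈ Finset.Icc 1 n, z i ≠ 1)
    (hzconj : ∀ i ∈ Finset.Icc 1 n, z (n + 1 - i) = conj (z i)) :
    Filter.liminf (fun k : ℕ => (∑ j ∈ Finset.Icc 1 n, (b j : ℂ) * z j ^ k).re)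
        Filter.atTop ≤
      -(∑ j ∈ Finset.Icc 1 n, b j ^ 2) / (∑ j ∈ Finset.Icc 1 n, b j) := by
  set I := Finset.Icc 1 n with hI
  set S : ℕ → ℂ := fun k => ∑ j ∈ I, (b j : ℂ) * z j ^ k with hS
  set R : ℕ → ℝ := fun k => (S k).re with hR
  set B : ℝ := ∑ j ∈ I, b j with hB
  set Q : ℝ := ∑ j ∈ I, b j ^ 2 with hQ
  -- the map i ↦ n+1-i is an involution of I
  have hmem : ∀ i ∈ I, n + 1 - i ∈ I := by
    intro i hi; simp only [hI, Finset.mem_Icc] at *; omega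
  have hinv : ∀ i ∈ I, n + 1 - (n + 1 - i) = i := by
    intro i hi; simp only [hI, Finset.mem_Icc] at hi; omega
  -- S k is real
  have hreal : ∀ k, conj (S k) = S k := by
    intro k
    rw [hS]
    simp only [map_sum, map_mul, map_pow, Complex.conj_ofReal]
    refine Finset.sum_nbij' (fun j => n + 1 - j) (fun j => n + 1 - j) hmem hmem hinv hinv ?_
    intro j hj
    show (b j : ℂ) * conj (z j) ^ k = (b (n + 1 - j) : ℂ) * z (n + 1 - j) ^ k
    rw [hbconj j hj, hzconj j hj]
  have hbne : ∀ j ∈ I, 0 ≤ b j := fun j hj => (hb0 j hj).le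
  have hBpos : 0 < B := Finset.sum_pos hb0 (Finset.nonempty_Icc.mpr (by omega))
  -- bound |R k| ≤ B
  have hSabs : ∀ k, ‖S k‖ ≤ B := by
    intro k
    calc ‖S k‖ ≤ ∑ j ∈ I, ‖(b j : ℂ) * z j ^ k‖ :=
          norm_sum_le _ _
    _ = ∑ j ∈ I, b j := by
          refine Finset.sum_congr rfl fun j hj => ?_
          rw [norm_mul, norm_pow, hzabs j hj, one_pow, mul_one, Complex.norm_real, Real.norm_eq_abs,
            _root_.abs_of_nonneg (hbne j hj)]
    _ = B := rfl
  have hRB : ∀ k, |R k| ≤ B := fun k =>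
    le_trans (Complex.abs_re_le_norm (S k)) (hSabs k)
  -- the square of R k
  have hRsq : ∀ k, R k ^ 2 = (S k * conj (S k)).re := by
    intro k
    have him : (S k).im = 0 := by
      have := congrArg Complex.im (hreal k)
      simp only [Complex.conj_im] at this
      linarith
    rw [hreal k, Complex.mul_re, him]
    ring
  -- first Cesàro limit : averages of R k tend to 0
  have key1 : ∀ N : ℕ, (∑ k ∈ Finset.range N, S k) / (N : ℂ)
      = ∑ j ∈ I, (b j : ℂ) * ((∑ k ∈ Finset.range N, z j ^ k) / (N : ℂ)) := by
    intro N
    rw [hS]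
    simp only [Finset.sum_comm (s := Finset.range N) (t := I), Finset.sum_div,
      ← Finset.mul_sum, mul_div_assoc]
  have avgC1 : Tendsto (fun N : ℕ => (∑ k ∈ Finset.range N, S k) / (N : ℂ)) atTop (nhds 0) := by
    have h0 : (0 : ℂ) = ∑ j ∈ I, (b j : ℂ) * 0 := by simp
    rw [h0]
    refine Tendsto.congr (fun N => (key1 N).symm) (tendsto_finset_sum _ fun j hj => ?_)
    have := (bt_cesaro_pow (z j) (hzabs j hj)).const_mul ((b j : ℂ))
    rwa [if_neg (hz1 j hj)] at this
  have avg1 : Tendsto (fun N : ℕ => (∑ k ∈ Finset.range N, R k) / (N : ℝ)) atTop (nhds 0) := by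
    have := (Complex.continuous_re.tendsto 0).comp avgC1
    simp only [Function.comp_def, Complex.zero_re] at this
    refine this.congr fun N => ?_
    rw [show ((N : ℕ) : ℂ) = ((N : ℝ) : ℂ) by push_cast; ring, Complex.div_ofReal_re,
      Complex.re_sum]
  -- second Cesàro limit : averages of (R k)^2
  set D : ℝ := ∑ p ∈ I ×ˢ I, (if z p.1 = z p.2 then b p.1 * b p.2 else 0) with hD
  have keyS : ∀ k, S k * conj (S k)
      = ∑ p ∈ I ×ˢ I, ((b p.1 * b p.2 : ℝ) : ℂ) * (z p.1 * conj (z p.2)) ^ k := by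
    intro k
    rw [hS]
    simp only [map_sum, map_mul, map_pow, Complex.conj_ofReal, Finset.sum_mul_sum,
      ← Finset.sum_product']
    refine Finset.sum_congr rfl fun p _ => ?_
    push_cast
    rw [mul_pow]
    ring
  have key2 : ∀ N : ℕ, (∑ k ∈ Finset.range N, S k * conj (S k)) / (N : ℂ)
      = ∑ p ∈ I ×ˢ I, ((b p.1 * b p.2 : ℝ) : ℂ)
          * ((∑ k ∈ Finset.range N, (z p.1 * conj (z p.2)) ^ k) / (N : ℂ)) := by
    intro N
    simp only [keyS, Finset.sum_comm (s := Finset.range N) (t := I ×ˢ I), Finset.sum_div,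
      ← Finset.mul_sum, mul_div_assoc]
  have avgC2 : Tendsto (fun N : ℕ => (∑ k ∈ Finset.range N, S k * conj (S k)) / (N : ℂ))
      atTop (nhds ((D : ℝ) : ℂ)) := by
    have hDC : ((D : ℝ) : ℂ) = ∑ p ∈ I ×ˢ I, ((b p.1 * b p.2 : ℝ) : ℂ)
        * (if z p.1 * conj (z p.2) = 1 then 1 else 0) := by
      rw [hD, Complex.ofReal_sum]
      refine Finset.sum_congr rfl fun p hp => ?_
      rw [Finset.mem_product] at hp
      simp only [bt_mul_conj_eq_one (hzabs p.2 hp.2)]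
      split_ifs <;> push_cast <;> ring
    rw [hDC]
    refine Tendsto.congr (fun N => (key2 N).symm) (tendsto_finset_sum _ fun p hp => ?_)
    rw [Finset.mem_product] at hp
    have habs : ‖z p.1 * conj (z p.2)‖ = 1 := by
      rw [norm_mul, Complex.norm_conj, hzabs p.1 hp.1, hzabs p.2 hp.2, mul_one]
    exact (bt_cesaro_pow _ habs).const_mul _
  have avg2 : Tendsto (fun N : ℕ => (∑ k ∈ Finset.range N, R k ^ 2) / (N : ℝ)) atTop (nhds D) := by
    have := (Complex.continuous_re.tendsto _).comp avgC2
    simp only [Function.comp_def, Complex.ofReal_re] at this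
    refine this.congr fun N => ?_
    rw [show ((N : ℕ) : ℂ) = ((N : ℝ) : ℂ) by push_cast; ring, Complex.div_ofReal_re,
      Complex.re_sum]
    congr 1
    exact Finset.sum_congr rfl fun k _ => (hRsq k).symm
  -- D ≥ Q
  have hDQ : Q ≤ D := by
    rw [hD, hQ, Finset.sum_product]
    refine Finset.sum_le_sum fun i hi => ?_
    have h1 : b i ^ 2 = (if z i = z i then b i * b i else 0) := by simp [sq]
    rw [h1]
    refine Finset.single_le_sum (f := fun j => if z i = z j then b i * b j else 0)
      (fun j hj => ?_) hi
    by_cases h : z i = z j <;> simp [h, mul_nonneg (hbne i hi) (hbne j hj)]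
  -- now the contradiction argument
  by_contra hcon
  push_neg at hcon
  set ℓ : ℝ := liminf R atTop with hl
  have hbdd : IsBoundedUnder (· ≥ ·) atTop R :=
    isBoundedUnder_of ⟨-B, fun k => neg_le_of_abs_le (hRB k)⟩
  set L : ℝ := (-Q / B + ℓ) / 2 with hLdef
  have hL1 : -Q / B < L := by rw [hLdef]; linarith
  have hL2 : L < ℓ := by rw [hLdef]; linarith
  obtain ⟨K, hK⟩ := eventually_atTop.mp (Filter.eventually_lt_of_lt_liminf hL2 hbdd)
  set g : ℕ → ℝ := fun k => (R k - L) * (B - R k) with hg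
  have hgpos : ∀ k ≥ K, 0 ≤ g k := by
    intro k hk
    exact mul_nonneg (by linarith [hK k hk]) (by linarith [(abs_le.mp (hRB k)).2])
  have htg : Tendsto (fun N : ℕ => (∑ k ∈ Finset.range N, g k) / (N : ℝ)) atTop
      (nhds (-(D + L * B))) := by
    have halg : ∀ᶠ N : ℕ in atTop, (B + L) * ((∑ k ∈ Finset.range N, R k) / (N : ℝ))
        - (∑ k ∈ Finset.range N, R k ^ 2) / (N : ℝ) - L * B
        = (∑ k ∈ Finset.range N, g k) / (N : ℝ) := by
      filter_upwards [eventually_ge_atTop 1] with N hN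
      have hN0 : (N : ℝ) ≠ 0 := by positivity
      have hsum : ∑ k ∈ Finset.range N, g k
          = (B + L) * (∑ k ∈ Finset.range N, R k) - (∑ k ∈ Finset.range N, R k ^ 2)
            - (N : ℝ) * (L * B) := by
        have he : ∀ k, g k = (B + L) * R k - R k ^ 2 - L * B := fun k => by rw [hg]; ring
        simp only [he, Finset.sum_sub_distrib, ← Finset.mul_sum, Finset.sum_const,
          Finset.card_range, nsmul_eq_mul]
        ring
      rw [hsum]
      field_simp
    have hlim : Tendsto (fun N : ℕ => (B + L) * ((∑ k ∈ Finset.range N, R k) / (N : ℝ))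
        - (∑ k ∈ Finset.range N, R k ^ 2) / (N : ℝ) - L * B) atTop (nhds (-(D + L * B))) := by
      have := ((avg1.const_mul (B + L)).sub avg2).sub (tendsto_const_nhds (x := L * B))
      convert this using 2
      ring
    exact hlim.congr' halg
  have hT0 : 0 ≤ -(D + L * B) := by
    set c : ℝ := ∑ k ∈ Finset.range K, g k with hc
    have hev : ∀ᶠ N : ℕ in atTop,
        c / (N : ℝ) ≤ (∑ k ∈ Finset.range N, g k) / (N : ℝ) := by
      filter_upwards [eventually_ge_atTop (max K 1)] with N hN
      have hKN : K ≤ N := le_trans (le_max_left _ _) hN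
      have hN1 : (1 : ℕ) ≤ N := le_trans (le_max_right _ _) hN
      have hNpos : (0 : ℝ) < (N : ℝ) := by exact_mod_cast hN1
      have hsplit : ∑ k ∈ Finset.range N, g k
          = c + ∑ k ∈ Finset.Ico K N, g k := by
        rw [hc]
        simp only [Finset.range_eq_Ico]
        exact (Finset.sum_Ico_consecutive g (Nat.zero_le K) hKN).symm
      have : c ≤ ∑ k ∈ Finset.range N, g k := by
        rw [hsplit]
        have : 0 ≤ ∑ k ∈ Finset.Ico K N, g k :=
          Finset.sum_nonneg fun k hk => hgpos k (Finset.mem_Ico.mp hk).1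
        linarith
      gcongr
    exact le_of_tendsto_of_tendsto (tendsto_const_div_atTop_nhds_zero_nat c) htg hev
  have hLB : -Q < L * B := by
    have := (div_lt_iff₀ hBpos).mp hL1
    linarith
  linarith
end

section
/- Let n be a positive integer, let b_1, …, b_n be complex numbers, and let z_1, …, z_n be complex numbers of absolute value 1. Then liminf_{k→∞} Re(∑_{j=1}^n b_j z_j^k) = inf_{k≥1} Re(∑_{j=1}^n b_j z_j^k); i.e., the liminf of the real parts of the power sums as k → ∞ coincides with their infimum over all positive integers k. -/
open Complex Filter Finset

lemma exists_pow_close (n : ℕ) (z : ℕ → ℂ)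
    (hz : ∀ j ∈ Finset.Icc 1 n, ‖z j‖ = 1) (ε : ℝ) (hε : 0 < ε) :
    ∃ d : ℕ, 1 ≤ d ∧ ∀ j ∈ Finset.Icc 1 n, ‖z j ^ d - 1‖ ≤ ε := by
  set F : ℕ → (Finset.Icc 1 n → ℂ) := fun m j => z (j : ℕ) ^ m with hF
  have hb : ∀ m, F m ∈ Metric.closedBall (0 : Finset.Icc 1 n → ℂ) 1 := by
    intro m
    rw [Metric.mem_closedBall, dist_zero_right]
    refine (pi_norm_le_iff_of_nonneg zero_le_one).2 fun j => ?_
    rw [hF]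
    simp only [norm_pow, hz j j.2, one_pow]
    exact le_refl 1
  obtain ⟨a, -, φ, hφ, hconv⟩ :=
    tendsto_subseq_of_bounded Metric.isBounded_closedBall hb
  obtain ⟨M, hM⟩ := (Metric.tendsto_atTop.1 hconv) (ε / 2) (half_pos hε)
  have h1 := hM M le_rfl
  have h2 := hM (M + 1) (Nat.le_succ M)
  have hdist : dist (F (φ (M + 1))) (F (φ M)) ≤ ε := by
    calc dist (F (φ (M + 1))) (F (φ M)) ≤ dist ((F ∘ φ) (M+1)) a + dist ((F ∘ φ) M) a :=
          dist_triangle_right _ _ _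
      _ ≤ ε / 2 + ε / 2 := add_le_add h2.le h1.le
      _ = ε := add_halves ε
  have hlt : φ M < φ (M + 1) := hφ (Nat.lt_succ_self M)
  refine ⟨φ (M + 1) - φ M, Nat.one_le_iff_ne_zero.2 (Nat.sub_ne_zero_of_lt hlt), ?_⟩
  intro j hj
  have key : z j ^ φ M * (z j ^ (φ (M + 1) - φ M) - 1) = z j ^ φ (M + 1) - z j ^ φ M := by
    rw [mul_sub, mul_one, ← pow_add, Nat.add_sub_cancel' hlt.le]
  have : ‖z j ^ (φ (M + 1) - φ M) - 1‖
      = ‖z j ^ φ (M + 1) - z j ^ φ M‖ := by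
    rw [← key, norm_mul, norm_pow, hz j hj, one_pow, one_mul]
  rw [this]
  have := (dist_pi_le_iff (le_trans dist_nonneg hdist)).1 hdist ⟨j, hj⟩
  simpa [hF, Complex.dist_eq] using this

lemma exists_pow_close_ge (n : ℕ) (z : ℕ → ℂ)
    (hz : ∀ j ∈ Finset.Icc 1 n, ‖z j‖ = 1) (ε : ℝ) (hε : 0 < ε) (N : ℕ) :
    ∃ d : ℕ, N ≤ d ∧ ∀ j ∈ Finset.Icc 1 n, ‖z j ^ d - 1‖ ≤ ε := by
  obtain ⟨d₀, hd₀, hclose⟩ := exists_pow_close n z hz (ε / (N + 1))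
    (div_pos hε (by positivity))
  refine ⟨(N + 1) * d₀, le_trans (Nat.le_succ N) (Nat.le_mul_of_pos_right _ hd₀), ?_⟩
  intro j hj
  have habs : ‖z j ^ d₀‖ = 1 := by rw [norm_pow, hz j hj, one_pow]
  have key : z j ^ ((N + 1) * d₀) - 1
      = (∑ i ∈ Finset.range (N + 1), (z j ^ d₀) ^ i) * (z j ^ d₀ - 1) := by
    rw [geom_sum_mul, ← pow_mul, Nat.mul_comm d₀ (N + 1)]
  rw [key, norm_mul]
  calc ‖∑ i ∈ Finset.range (N + 1), (z j ^ d₀) ^ i‖ *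
        ‖z j ^ d₀ - 1‖
      ≤ (N + 1) * (ε / (N + 1)) := by
        refine mul_le_mul ?_ (hclose j hj) (by positivity) (by positivity)
        calc ‖∑ i ∈ Finset.range (N + 1), (z j ^ d₀) ^ i‖
            ≤ ∑ i ∈ Finset.range (N + 1), ‖(z j ^ d₀) ^ i‖ :=
              norm_sum_le _ _
          _ = ∑ i ∈ Finset.range (N + 1), 1 := by
              refine Finset.sum_congr rfl fun i _ => ?_
              rw [norm_pow, habs, one_pow]
          _ = (N + 1) := by simp
    _ = ε := by field_simp

/-- **Almost periodicity: liminf equals inf.**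
For complex numbers `b 1, …, b n` and unimodular `z 1, …, z n`, the liminf as `k → ∞`
of the real parts of the power sums `∑ j, b j * z j ^ k` coincides with their infimum
over all positive integers `k`. -/
theorem liminf_eq_inf_power_sum
    (n : ℕ) (hn : 1 ≤ n) (b z : ℕ → ℂ)
    (hzabs : ∀ j ∈ Finset.Icc 1 n, ‖z j‖ = 1) :
    Filter.liminf (fun k : ℕ => (∑ j ∈ Finset.Icc 1 n, b j * z j ^ k).re) Filter.atTop =
      ⨅ k : ℕ+, (∑ j ∈ Finset.Icc 1 n, b j * z j ^ (k : ℕ)).re := by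
  set f : ℕ → ℝ := fun k => (∑ j ∈ Finset.Icc 1 n, b j * z j ^ k).re with hf
  set B : ℝ := ∑ j ∈ Finset.Icc 1 n, ‖b j‖ with hB
  have hfB : ∀ k, |f k| ≤ B := by
    intro k
    calc |f k| ≤ ‖∑ j ∈ Finset.Icc 1 n, b j * z j ^ k‖ :=
          Complex.abs_re_le_norm _
      _ ≤ ∑ j ∈ Finset.Icc 1 n, ‖b j * z j ^ k‖ := norm_sum_le _ _
      _ = B := by
          refine Finset.sum_congr rfl fun j hj => ?_
          rw [norm_mul, norm_pow, hzabs j hj, one_pow, mul_one]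
  have hbdd_above : IsBoundedUnder (· ≤ ·) atTop f :=
    Filter.isBoundedUnder_of ⟨B, fun k => (abs_le.1 (hfB k)).2⟩
  have hbdd_below : IsBoundedUnder (· ≥ ·) atTop f :=
    Filter.isBoundedUnder_of ⟨-B, fun k => (abs_le.1 (hfB k)).1⟩
  have hrange : BddBelow (Set.range fun k : ℕ+ => f (k : ℕ)) :=
    ⟨-B, by rintro x ⟨k, rfl⟩; exact (abs_le.1 (hfB (k : ℕ))).1⟩
  refine le_antisymm ?_ ?_
  · -- liminf ≤ iInf
    refine le_ciInf fun k => ?_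
    refine le_of_forall_pos_le_add fun δ hδ => ?_
    refine liminf_le_of_frequently_le ?_ hbdd_below
    rw [frequently_atTop]
    intro N
    obtain ⟨d, hdN, hclose⟩ := exists_pow_close_ge n z hzabs (δ / (B + 1))
      (by positivity) N
    have hBnn : 0 ≤ B := le_trans (abs_nonneg _) (hfB 0)
    refine ⟨(k : ℕ) + d, le_trans hdN (Nat.le_add_left _ _), ?_⟩
    have hdiff : |f ((k : ℕ) + d) - f (k : ℕ)| ≤ δ := by
      have : f ((k : ℕ) + d) - f (k : ℕ)
          = (∑ j ∈ Finset.Icc 1 n, b j * z j ^ (k : ℕ) * (z j ^ d - 1)).re := by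
        rw [hf]
        simp only [← Complex.sub_re, ← Finset.sum_sub_distrib]
        congr 1
        refine Finset.sum_congr rfl fun j hj => ?_
        rw [pow_add]
        ring
      rw [this]
      calc |(∑ j ∈ Finset.Icc 1 n, b j * z j ^ (k : ℕ) * (z j ^ d - 1)).re|
          ≤ ‖∑ j ∈ Finset.Icc 1 n, b j * z j ^ (k : ℕ) * (z j ^ d - 1)‖ :=
            Complex.abs_re_le_norm _
        _ ≤ ∑ j ∈ Finset.Icc 1 n, ‖b j * z j ^ (k : ℕ) * (z j ^ d - 1)‖ :=
            norm_sum_le _ _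
        _ ≤ ∑ j ∈ Finset.Icc 1 n, ‖b j‖ * (δ / (B + 1)) := by
            refine Finset.sum_le_sum fun j hj => ?_
            rw [norm_mul, norm_mul, norm_pow, hzabs j hj, one_pow, mul_one]
            exact mul_le_mul_of_nonneg_left (hclose j hj) (norm_nonneg _)
        _ = B * (δ / (B + 1)) := by rw [← Finset.sum_mul]
        _ ≤ δ := by
            rw [mul_div_assoc' , div_le_iff₀ (by positivity)]
            nlinarith
    show f ((k : ℕ) + d) ≤ f (k : ℕ) + δ
    linarith [(abs_le.1 hdiff).2]
  · -- iInf ≤ liminf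
    refine le_liminf_of_le hbdd_above.isCoboundedUnder_ge ?_
    filter_upwards [eventually_ge_atTop 1] with k hk
    exact ciInf_le hrange (⟨k, hk⟩ : ℕ+)
end

section
/- Let m be a positive integer and let b_1, …, b_m and α_1, …, α_m be real numbers such that the α_j are distinct and satisfy 0 < α_j < 1/2 for all j. Then inf_{k∈ℤ} ∑_{j=1}^m b_j cos(2π α_j k) ≤ −(1/(2m)) ∑_{j=1}^m |b_j|. -/
open Real Finset Filter

private lemma cesaro_cos_zero (β : ℝ) (hβ : ∀ n : ℤ, β ≠ (n : ℝ)) :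
    Tendsto (fun N : ℕ => (∑ k ∈ Finset.range N, Real.cos (2 * π * β * k)) / N)
      atTop (nhds 0) := by
  set z : ℂ := Complex.exp (((2 * π * β : ℝ) : ℂ) * Complex.I) with hzdef
  have hz1 : z ≠ 1 := by
    intro h
    rw [hzdef, Complex.exp_eq_one_iff] at h
    obtain ⟨n, hn⟩ := h
    have h2 : ((2 * π * β : ℝ) : ℂ) = ((2 * π * (n : ℝ) : ℝ) : ℂ) := by
      apply mul_right_cancel₀ Complex.I_ne_zero
      rw [hn]; push_cast; ring
    have h3 : 2 * π * β = 2 * π * (n : ℝ) := by exact_mod_cast h2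
    exact hβ n (mul_left_cancel₀ (by positivity : (2 * π : ℝ) ≠ 0) h3)
  have hzabs : ‖z‖ = 1 := by
    rw [hzdef, Complex.norm_exp]
    simp
  have hd : 0 < ‖z - 1‖ := by
    rw [norm_pos_iff]
    exact sub_ne_zero.mpr hz1
  have hbound : ∀ N : ℕ, |∑ k ∈ Finset.range N, Real.cos (2 * π * β * k)| ≤
      2 / ‖z - 1‖ := by
    intro N
    have hsum : (∑ k ∈ Finset.range N, Real.cos (2 * π * β * k)) =
        (∑ k ∈ Finset.range N, z ^ k).re := by
      rw [Complex.re_sum]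
      refine Finset.sum_congr rfl fun k _ => ?_
      have hzk : z ^ k = Complex.exp (((2 * π * β * k : ℝ) : ℂ) * Complex.I) := by
        rw [hzdef, ← Complex.exp_nat_mul]
        congr 1; push_cast; ring
      rw [hzk, Complex.exp_ofReal_mul_I_re]
    have habs2 : ‖z ^ N - 1‖ ≤ 2 := by
      have h1 := norm_sub_le (z ^ N) 1
      have : ‖z ^ N‖ = 1 := by
        rw [norm_pow, hzabs, one_pow]
      rw [this, norm_one] at h1
      calc ‖z ^ N - 1‖ = ‖z ^ N - 1‖ := rfl
        _ ≤ 2 := by linarith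
    rw [hsum]
    calc |(∑ k ∈ Finset.range N, z ^ k).re| ≤ ‖∑ k ∈ Finset.range N, z ^ k‖ :=
          Complex.abs_re_le_norm _
      _ = ‖z ^ N - 1‖ / ‖z - 1‖ := by
          rw [geom_sum_eq hz1, norm_div]
      _ ≤ 2 / ‖z - 1‖ := by gcongr
  apply squeeze_zero_norm ?_
    (tendsto_const_div_atTop_nhds_zero_nat (2 / ‖z - 1‖))
  intro n
  rcases Nat.eq_zero_or_pos n with h | h
  · simp [h]
  · rw [Real.norm_eq_abs, abs_div, abs_of_nonneg (by positivity : (0:ℝ) ≤ (n:ℝ))]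
    gcongr
    exact hbound n

private lemma not_int_of_Ioo {x : ℝ} (h0 : 0 < x) (h1 : x < 1) : ∀ n : ℤ, x ≠ (n : ℝ) := by
  intro n hx
  rw [hx] at h0 h1
  have h0' : (0 : ℤ) < n := by exact_mod_cast h0
  have h1' : n < 1 := by exact_mod_cast h1
  omega

private lemma not_int_of_ne {x : ℝ} (hx : x ≠ 0) (hlo : -1 < x) (hhi : x < 1) :
    ∀ n : ℤ, x ≠ (n : ℝ) := by
  intro n h
  rw [h] at hx hlo hhi
  have h1 : (-1 : ℤ) < n := by exact_mod_cast hlo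
  have h2 : n < 1 := by exact_mod_cast hhi
  have : n = 0 := by omega
  rw [this] at hx
  simp at hx

private lemma base_nn : Tendsto (fun N : ℕ => (N : ℝ) / N) atTop (nhds 1) := by
  have h : ∀ᶠ N : ℕ in atTop, (1 : ℝ) = (N : ℝ) / N := by
    filter_upwards [eventually_gt_atTop 0] with N hN
    rw [div_self (Nat.cast_ne_zero.mpr hN.ne')]
  exact Tendsto.congr' h tendsto_const_nhds

/-- **Corollary 4 (Beukers–Tijdeman): one-sided cosine sums.**
Let `b 1, …, b m` and `α 1, …, α m` be real numbers with the `α j` distinct and strictly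
between `0` and `1/2`.  Then
`inf_{k ∈ ℤ} ∑ j, b j * cos (2π α j k) ≤ -(1/(2m)) ∑ j |b j|`. -/
theorem one_sided_cosine_sum
    (m : ℕ) (hm : 1 ≤ m) (b α : ℕ → ℝ)
    (hα : ∀ j ∈ Finset.Icc 1 m, 0 < α j ∧ α j < 1 / 2)
    (hαdist : Set.InjOn α (Set.Icc 1 m)) :
    (⨅ k : ℤ, ∑ j ∈ Finset.Icc 1 m, b j * Real.cos (2 * Real.pi * α j * k)) ≤
      -(1 / (2 * m)) * ∑ j ∈ Finset.Icc 1 m, |b j| := by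
  have hmR : (0 : ℝ) < m := by exact_mod_cast hm
  set I : Finset ℕ := Finset.Icc 1 m with hI
  have hInonempty : I.Nonempty := ⟨1, by simp [hI, hm]⟩
  obtain ⟨j0, hj0I, hj0max⟩ := I.exists_max_image (fun j => |b j|) hInonempty
  have hα0 := hα j0 hj0I
  set s : ℝ := if 0 ≤ b j0 then (-1 : ℝ) else 1 with hsdef
  have hs_abs : |s| = 1 := by rw [hsdef]; split <;> simp
  have hsb : s * b j0 = -|b j0| := by
    by_cases h : 0 ≤ b j0
    · rw [hsdef, if_pos h, abs_of_nonneg h]; ring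
    · rw [hsdef, if_neg h, abs_of_neg (not_le.mp h)]; ring
  set w : ℕ → ℝ := fun k => 1 + s * Real.cos (2 * π * α j0 * k) with hwdef
  have hw : ∀ k, 0 ≤ w k := by
    intro k
    have h1 : |s * Real.cos (2 * π * α j0 * k)| ≤ 1 := by
      rw [abs_mul, hs_abs, one_mul]; exact Real.abs_cos_le_one _
    have := neg_abs_le (s * Real.cos (2 * π * α j0 * k))
    simp only [hwdef]; linarith [abs_le.mp h1]
  set F : ℕ → ℝ := fun k => ∑ j ∈ I, b j * Real.cos (2 * π * α j * k) with hFdef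
  set L : ℝ := ⨅ k : ℤ, ∑ j ∈ Finset.Icc 1 m, b j * Real.cos (2 * Real.pi * α j * k) with hLdef
  -- bounded below
  have hbdd : BddBelow (Set.range fun k : ℤ =>
      ∑ j ∈ Finset.Icc 1 m, b j * Real.cos (2 * Real.pi * α j * k)) := by
    refine ⟨-∑ j ∈ Finset.Icc 1 m, |b j|, ?_⟩
    rintro x ⟨k, rfl⟩
    rw [← Finset.sum_neg_distrib]
    refine Finset.sum_le_sum fun j _ => ?_
    have h1 : |b j * Real.cos (2 * Real.pi * α j * k)| ≤ |b j| := by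
      rw [abs_mul]
      exact mul_le_of_le_one_right (abs_nonneg _) (Real.abs_cos_le_one _)
    linarith [neg_abs_le (b j * Real.cos (2 * Real.pi * α j * k))]
  have hLF : ∀ k : ℕ, L ≤ F k := by
    intro k
    have h := ciInf_le hbdd ((k : ℤ))
    rw [← hLdef] at h
    refine h.trans_eq ?_
    rw [hFdef]
    refine Finset.sum_congr rfl fun j _ => ?_
    push_cast
    ring_nf
  -- pointwise trig expansion
  have hFW : ∀ k : ℕ, F k * w k = ∑ j ∈ I,
      (b j * Real.cos (2 * π * α j * k)
        + s * b j / 2 * Real.cos (2 * π * (α j + α j0) * k)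
        + s * b j / 2 * Real.cos (2 * π * (α j - α j0) * k)) := by
    intro k
    rw [hFdef]
    simp only
    rw [Finset.sum_mul]
    refine Finset.sum_congr rfl fun j _ => ?_
    have hcc : Real.cos (2 * π * α j * k) * Real.cos (2 * π * α j0 * k) =
        (Real.cos (2 * π * (α j + α j0) * k) + Real.cos (2 * π * (α j - α j0) * k)) / 2 := by
      have h3 : 2 * π * (α j + α j0) * k = 2 * π * α j * k + 2 * π * α j0 * k := by ring
      have h4 : 2 * π * (α j - α j0) * k = 2 * π * α j * k - 2 * π * α j0 * k := by ring
      rw [h3, h4, Real.cos_add, Real.cos_sub]; ring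
    have : b j * Real.cos (2 * π * α j * k) * w k =
        b j * Real.cos (2 * π * α j * k)
          + s * b j * (Real.cos (2 * π * α j * k) * Real.cos (2 * π * α j0 * k)) := by
      rw [hwdef]; ring
    rw [this, hcc]; ring
  -- rewrite averaged sums
  have hRW : ∀ N : ℕ, (∑ k ∈ Finset.range N, F k * w k) / N = ∑ j ∈ I,
      (b j * ((∑ k ∈ Finset.range N, Real.cos (2 * π * α j * k)) / N)
        + s * b j / 2 * ((∑ k ∈ Finset.range N, Real.cos (2 * π * (α j + α j0) * k)) / N)
        + s * b j / 2 * ((∑ k ∈ Finset.range N, Real.cos (2 * π * (α j - α j0) * k)) / N)) := by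
    intro N
    calc (∑ k ∈ Finset.range N, F k * w k) / N
        = (∑ j ∈ I, ∑ k ∈ Finset.range N,
            (b j * Real.cos (2 * π * α j * k)
              + s * b j / 2 * Real.cos (2 * π * (α j + α j0) * k)
              + s * b j / 2 * Real.cos (2 * π * (α j - α j0) * k))) / N := by
          rw [Finset.sum_comm]
          congr 1
          exact Finset.sum_congr rfl fun k _ => hFW k
      _ = _ := by
          rw [Finset.sum_div]
          refine Finset.sum_congr rfl fun j _ => ?_
          rw [Finset.sum_add_distrib, Finset.sum_add_distrib,
            ← Finset.mul_sum, ← Finset.mul_sum, ← Finset.mul_sum]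
          ring
  -- tendsto of weight average
  have hni0 : ∀ n : ℤ, α j0 ≠ (n : ℝ) := not_int_of_Ioo hα0.1 (by linarith [hα0.2])
  have T1 : Tendsto (fun N : ℕ => (∑ k ∈ Finset.range N, w k) / N) atTop (nhds 1) := by
    have hc := cesaro_cos_zero (α j0) hni0
    have hrw : ∀ N : ℕ, (∑ k ∈ Finset.range N, w k) / N =
        (N : ℝ) / N + s * ((∑ k ∈ Finset.range N, Real.cos (2 * π * α j0 * k)) / N) := by
      intro N
      rw [hwdef]
      simp only
      rw [Finset.sum_add_distrib, Finset.sum_const, ← Finset.mul_sum, Finset.card_range]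
      ring
    refine Tendsto.congr (fun N => (hrw N).symm) ?_
    have := base_nn.add (hc.const_mul s)
    simpa using this
  -- tendsto of weighted f average
  have T2 : Tendsto (fun N : ℕ => (∑ k ∈ Finset.range N, F k * w k) / N) atTop
      (nhds (s * b j0 / 2)) := by
    have Tj : ∀ j ∈ I, Tendsto (fun N : ℕ =>
        b j * ((∑ k ∈ Finset.range N, Real.cos (2 * π * α j * k)) / N)
          + s * b j / 2 * ((∑ k ∈ Finset.range N, Real.cos (2 * π * (α j + α j0) * k)) / N)
          + s * b j / 2 * ((∑ k ∈ Finset.range N, Real.cos (2 * π * (α j - α j0) * k)) / N))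
        atTop (nhds (if j = j0 then s * b j0 / 2 else 0)) := by
      intro j hj
      have hαj := hα j hj
      have h1 := cesaro_cos_zero (α j) (not_int_of_Ioo hαj.1 (by linarith [hαj.2]))
      have h2 := cesaro_cos_zero (α j + α j0)
        (not_int_of_Ioo (by linarith [hαj.1, hα0.1]) (by linarith [hαj.2, hα0.2]))
      by_cases hjj : j = j0
      · subst hjj
        have h3 : Tendsto (fun N : ℕ =>
            (∑ k ∈ Finset.range N, Real.cos (2 * π * (α j - α j) * k)) / N) atTop (nhds 1) := by
          have hsimp : ∀ N : ℕ,
              (∑ k ∈ Finset.range N, Real.cos (2 * π * (α j - α j) * k)) / N = (N : ℝ) / N := by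
            intro N
            congr 1
            simp
          exact Tendsto.congr (fun N => (hsimp N).symm) base_nn
        have := ((h1.const_mul (b j)).add ((h2.const_mul (s * b j / 2)))).add
          (h3.const_mul (s * b j / 2))
        simp only [if_pos rfl]
        simpa using this
      · have hjS : j ∈ Set.Icc 1 m := by
          rw [Set.mem_Icc]; exact Finset.mem_Icc.mp (hI ▸ hj)
        have hj0S : j0 ∈ Set.Icc 1 m := by
          rw [Set.mem_Icc]; exact Finset.mem_Icc.mp (hI ▸ hj0I)
        have hne : α j - α j0 ≠ 0 :=
          sub_ne_zero.mpr fun h => hjj (hαdist hjS hj0S h)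
        have h3 := cesaro_cos_zero (α j - α j0)
          (not_int_of_ne hne (by linarith [hαj.1, hα0.2]) (by linarith [hαj.2, hα0.1]))
        have := ((h1.const_mul (b j)).add ((h2.const_mul (s * b j / 2)))).add
          (h3.const_mul (s * b j / 2))
        simp only [if_neg hjj]
        simpa using this
    have Tsum := tendsto_finset_sum I Tj
    have hsum : (∑ j ∈ I, if j = j0 then s * b j0 / 2 else 0) = s * b j0 / 2 := by
      rw [Finset.sum_ite_eq' I j0 (fun _ => s * b j0 / 2), if_pos hj0I]
    rw [hsum] at Tsum
    exact Tendsto.congr (fun N => (hRW N).symm) Tsum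
  -- main inequality
  have main : L ≤ s * b j0 / 2 := by
    have TA : Tendsto (fun N : ℕ => L * ((∑ k ∈ Finset.range N, w k) / N)) atTop (nhds L) := by
      have := T1.const_mul L
      simpa using this
    refine le_of_tendsto_of_tendsto' TA T2 fun N => ?_
    rcases Nat.eq_zero_or_pos N with h | h
    · simp [h]
    · rw [← mul_div_assoc]
      apply div_le_div_of_nonneg_right ?_ ?_
      · rw [Finset.mul_sum]
        exact Finset.sum_le_sum fun k _ => mul_le_mul_of_nonneg_right (hLF k) (hw k)
      · exact_mod_cast h.le
  -- finish
  have hsumle : ∑ j ∈ Finset.Icc 1 m, |b j| ≤ m * |b j0| := by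
    calc ∑ j ∈ Finset.Icc 1 m, |b j| ≤ ∑ _j ∈ Finset.Icc 1 m, |b j0| :=
          Finset.sum_le_sum fun j hj => hj0max j (hI ▸ hj)
      _ = m * |b j0| := by
          rw [Finset.sum_const, Nat.card_Icc]
          simp [nsmul_eq_mul]
  have hfinal : -|b j0| / 2 ≤ -(1 / (2 * m)) * ∑ j ∈ Finset.Icc 1 m, |b j| := by
    have h1 : (1 / (2 * (m : ℝ))) * ∑ j ∈ Finset.Icc 1 m, |b j| ≤
        (1 / (2 * m)) * (m * |b j0|) := by
      apply mul_le_mul_of_nonneg_left hsumle (by positivity)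
    have h2 : (1 / (2 * (m : ℝ))) * (m * |b j0|) = |b j0| / 2 := by
      field_simp
    linarith
  calc L ≤ s * b j0 / 2 := main
    _ = -|b j0| / 2 := by rw [hsb]
    _ ≤ _ := hfinal
end

section
/- Let m be a positive integer, let b_1, …, b_m be real numbers, and let α_1, …, α_m be real numbers such that the ℚ-linear span of α_1, …, α_m does not contain 1. Then inf_{k∈ℤ} ∑_{j=1}^m b_j cos(2π α_j k) = inf_{t∈ℝ} ∑_{j=1}^m b_j cos(2π α_j t); i.e., the infimum over integer arguments equals the infimum over real arguments. -/
open Real Finset Filter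

noncomputable section BT

/-- `ee θ = exp (2 π i θ)`. -/
def ee (θ : ℝ) : ℂ := Complex.exp (2 * Real.pi * θ * Complex.I)

lemma ee_add (x y : ℝ) : ee (x + y) = ee x * ee y := by
  rw [ee, ee, ee, ← Complex.exp_add]
  congr 1
  push_cast
  ring

lemma ee_zero : ee 0 = 1 := by simp [ee]

lemma ee_int (q : ℤ) : ee q = 1 := by
  rw [ee, show (2 * (Real.pi:ℂ) * ((q:ℝ):ℂ) * Complex.I) = (q:ℂ) * (2 * Real.pi * Complex.I) by push_cast; ring]
  exact Complex.exp_int_mul_two_pi_mul_I q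

lemma ee_int_mul (θ : ℝ) (k : ℤ) : ee (θ * k) = ee θ ^ k := by
  rw [ee, ee, show (2 * (Real.pi:ℂ) * ((θ * (k:ℝ) : ℝ):ℂ) * Complex.I) = (k:ℂ) * (2 * Real.pi * θ * Complex.I) by push_cast; ring]
  exact Complex.exp_int_mul _ k

lemma norm_ee (θ : ℝ) : ‖ee θ‖ = 1 := by
  rw [ee, show (2 * (Real.pi:ℂ) * ((θ:ℝ):ℂ) * Complex.I) = ((2 * Real.pi * θ : ℝ):ℂ) * Complex.I by push_cast; ring]
  exact Complex.norm_exp_ofReal_mul_I _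

lemma ee_ne_zero (θ : ℝ) : ee θ ≠ 0 := Complex.exp_ne_zero _

lemma conj_ee (θ : ℝ) : (starRingEnd ℂ) (ee θ) = ee (-θ) := by
  rw [ee, ee, ← Complex.exp_conj]
  congr 1
  simp [Complex.ext_iff]

lemma ee_eq_one (q : ℤ) (θ : ℝ) (h : θ = q) : ee θ = 1 := h ▸ ee_int q

lemma ee_eq_one_iff (θ : ℝ) : ee θ = 1 ↔ ∃ q : ℤ, θ = q := by
  rw [ee, Complex.exp_eq_one_iff]
  constructor
  · rintro ⟨n, hn⟩
    refine ⟨n, ?_⟩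
    have h2 : (2 * (Real.pi:ℂ) * Complex.I) ≠ 0 := by
      simp [Real.pi_ne_zero, Complex.I_ne_zero]
    have : ((θ:ℂ)) * (2 * (Real.pi:ℂ) * Complex.I) = (n:ℂ) * (2 * (Real.pi:ℂ) * Complex.I) := by
      rw [← hn]; ring
    have := mul_right_cancel₀ h2 this
    exact_mod_cast this
  · rintro ⟨q, rfl⟩
    exact ⟨q, by push_cast; ring⟩

/-- Average over `Icc (-K) K`. -/
def Av (K : ℕ) (f : ℤ → ℂ) : ℂ := (2 * (K:ℂ) + 1)⁻¹ * ∑ k ∈ Finset.Icc (-(K:ℤ)) K, f k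

lemma card_IccK (K : ℕ) : (Finset.Icc (-(K:ℤ)) K).card = 2 * K + 1 := by
  rw [Int.card_Icc]
  omega

lemma twoK_ne : ∀ K : ℕ, (2 * (K:ℂ) + 1) ≠ 0 := by
  intro K
  have : (0:ℝ) < 2 * K + 1 := by positivity
  intro h
  have h2 : (2 * (K:ℂ) + 1) = ((2 * (K:ℝ) + 1 : ℝ) : ℂ) := by push_cast; ring
  rw [h2, Complex.ofReal_eq_zero] at h
  linarith

lemma Av_zero_freq (K : ℕ) : Av K (fun k => ee ((0:ℝ) * k)) = 1 := by
  have : ∀ k : ℤ, ee ((0:ℝ) * k) = 1 := fun k => by rw [zero_mul, ee_zero]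
  simp only [Av, this, Finset.sum_const, card_IccK, nsmul_eq_mul, mul_one]
  rw [show ((2 * K + 1 : ℕ) : ℂ) = 2 * (K:ℂ) + 1 by push_cast; ring, inv_mul_cancel₀ (twoK_ne K)]

lemma tendsto_Av_ee (θ : ℝ) (hθ : ∀ q : ℤ, θ = (q:ℝ) → θ = 0) :
    Tendsto (fun K => Av K (fun k => ee (θ * k))) atTop (nhds (if θ = 0 then 1 else 0)) := by
  by_cases h0 : θ = 0
  · subst h0
    simp only [if_pos rfl]
    simpa using tendsto_const_nhds.congr (fun K => (Av_zero_freq K).symm)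
  · rw [if_neg h0]
    set z := ee θ with hz
    have hz1 : z ≠ 1 := by
      intro h
      obtain ⟨q, hq⟩ := (ee_eq_one_iff θ).1 h
      exact h0 (hθ q hq)
    have hzne : z ≠ 0 := ee_ne_zero θ
    have hnormz : ‖z‖ = 1 := norm_ee θ
    -- bound each average
    have key : ∀ K : ℕ, ‖Av K (fun k => ee (θ * k))‖ ≤ (2 / ‖z - 1‖) * (2 * (K:ℝ) + 1)⁻¹ := by
      intro K
      have hsum : ∑ k ∈ Finset.Icc (-(K:ℤ)) K, ee (θ * k)
          = z ^ (-(K:ℤ)) * ∑ j ∈ Finset.range (2 * K + 1), z ^ j := by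
        rw [Finset.mul_sum]
        rw [show Finset.Icc (-(K:ℤ)) K = Finset.map ⟨fun j : ℕ => -(K:ℤ) + j, fun a b h => by exact_mod_cast add_left_cancel h⟩ (Finset.range (2*K+1)) by
          ext x
          simp only [Finset.mem_Icc, Finset.mem_map, Finset.mem_range, Function.Embedding.coeFn_mk]
          constructor
          · intro hx; exact ⟨(x + K).toNat, by omega, by show -(K:ℤ) + (((x + K).toNat : ℕ) : ℤ) = x; omega⟩
          · rintro ⟨a, ha, rfl⟩; show -(K:ℤ) ≤ -(K:ℤ) + (a:ℤ) ∧ -(K:ℤ) + (a:ℤ) ≤ K; omega]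
        rw [Finset.sum_map]
        refine Finset.sum_congr rfl fun j hj => ?_
        show ee (θ * ((-(K:ℤ) + (j:ℤ) : ℤ) : ℝ)) = _
        rw [ee_int_mul, zpow_add₀ hzne, zpow_natCast]
      have hgeom : ∑ j ∈ Finset.range (2 * K + 1), z ^ j = (z ^ (2 * K + 1) - 1) / (z - 1) :=
        geom_sum_eq hz1 _
      have hnorm : ‖∑ k ∈ Finset.Icc (-(K:ℤ)) K, ee (θ * k)‖ ≤ 2 / ‖z - 1‖ := by
        rw [hsum, hgeom, norm_mul, norm_div]
        have h1 : ‖z ^ (-(K:ℤ))‖ = 1 := by rw [norm_zpow, hnormz, one_zpow]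
        rw [h1, one_mul]
        gcongr
        calc ‖z ^ (2 * K + 1) - 1‖ ≤ ‖z ^ (2*K+1)‖ + 1 := by
              simpa using norm_sub_le (z ^ (2*K+1)) 1
          _ ≤ 2 := by rw [norm_pow, hnormz, one_pow]; norm_num
      rw [Av, norm_mul, mul_comm]
      gcongr
      rw [norm_inv]
      apply le_of_eq
      congr 1
      rw [show (2 * (K:ℂ) + 1) = ((2 * (K:ℝ) + 1 : ℝ):ℂ) by push_cast; ring]
      rw [Complex.norm_real, Real.norm_eq_abs, abs_of_pos (by positivity)]
    have hten : Tendsto (fun K : ℕ => (2 / ‖z - 1‖) * (2 * (K:ℝ) + 1)⁻¹) atTop (nhds 0) := by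
      rw [show (0:ℝ) = (2 / ‖z - 1‖) * 0 by ring]
      apply Tendsto.const_mul
      apply Tendsto.inv_tendsto_atTop
      apply Filter.tendsto_atTop_add_const_right
      exact (tendsto_natCast_atTop_atTop (R := ℝ)).const_mul_atTop (by norm_num)
    exact squeeze_zero_norm key hten

/-- triangular (Fejér) coefficients -/
def gg (W : ℕ) (y : ℤ) : ℝ := (((W:ℤ) - |y|).toNat : ℝ)

lemma gg_nonneg (W : ℕ) (y : ℤ) : 0 ≤ gg W y := Nat.cast_nonneg _

lemma gg_mono (W : ℕ) (y : ℤ) : gg W y ≤ gg (W+1) y := by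
  unfold gg
  have : ((W:ℤ) - |y|).toNat ≤ (((W:ℕ)+1:ℤ) - |y|).toNat := by omega
  exact_mod_cast this

lemma gg_zero_of (W : ℕ) (y : ℤ) (h : (W:ℤ) ≤ |y|) : gg W y = 0 := by
  unfold gg
  have : ((W:ℤ) - |y|).toNat = 0 := by omega
  simp [this]

lemma gg_shift_low (W : ℕ) (y σ : ℤ) (hσ : |σ| ≤ 1) : gg (W-1) y ≤ gg W (y - σ) := by
  unfold gg
  have h1 : |y - σ| ≤ |y| + |σ| := abs_sub y σ
  have h0 : 0 ≤ |y| := abs_nonneg y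
  have : ((((W-1:ℕ)):ℤ) - |y|).toNat ≤ ((W:ℤ) - |y - σ|).toNat := by omega
  exact_mod_cast this

lemma gg_shift_high (W : ℕ) (y σ : ℤ) (hσ : |σ| ≤ 1) : gg W (y - σ) ≤ gg (W+1) y := by
  unfold gg
  have h1 : |y| - |σ| ≤ |y - σ| := abs_sub_abs_le_abs_sub y σ
  have : ((W:ℤ) - |y - σ|).toNat ≤ ((((W+1:ℕ)):ℤ) - |y|).toNat := by omega
  exact_mod_cast this

lemma gg_le (W : ℕ) (y : ℤ) : gg W y ≤ W := by
  unfold gg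
  have h0 : 0 ≤ |y| := abs_nonneg y
  have : ((W:ℤ) - |y|).toNat ≤ W := by omega
  exact_mod_cast this

lemma gg_self_zero (W : ℕ) : gg W 0 = W := by
  unfold gg; simp

/-- pair count : ∑_{a,b ∈ [0,W)} h(a-b) = ∑_{|y|≤W} (W-|y|)⁺ h(y) -/
lemma pair_count (h : ℤ → ℂ) : ∀ W : ℕ,
    ∑ a ∈ Finset.range W, ∑ b ∈ Finset.range W, h ((a:ℤ) - b)
      = ∑ y ∈ Finset.Icc (-(W:ℤ)) W, (gg W y : ℂ) * h y := by
  intro W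
  induction W with
  | zero => simp [gg]
  | succ W ih =>
    -- LHS step
    have hL : ∑ a ∈ Finset.range (W+1), ∑ b ∈ Finset.range (W+1), h ((a:ℤ) - b)
        = (∑ a ∈ Finset.range W, ∑ b ∈ Finset.range W, h ((a:ℤ) - b))
          + ((∑ a ∈ Finset.range W, h ((a:ℤ) - W)) + ∑ b ∈ Finset.range (W+1), h ((W:ℤ) - b)) := by
      rw [Finset.sum_range_succ]
      have : ∀ a ∈ Finset.range W, ∑ b ∈ Finset.range (W+1), h ((a:ℤ) - b)
          = (∑ b ∈ Finset.range W, h ((a:ℤ) - b)) + h ((a:ℤ) - W) := fun a _ => Finset.sum_range_succ _ _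
      rw [Finset.sum_congr rfl this, Finset.sum_add_distrib]
      push_cast
      ring
    -- new-terms identity
    have hnew : (∑ a ∈ Finset.range W, h ((a:ℤ) - W)) + ∑ b ∈ Finset.range (W+1), h ((W:ℤ) - b)
        = ∑ y ∈ Finset.Icc (-(W:ℤ)) W, h y := by
      have e1 : ∑ a ∈ Finset.range W, h ((a:ℤ) - W) = ∑ y ∈ Finset.Icc (-(W:ℤ)) (-1), h y := by
        apply Finset.sum_nbij' (fun a : ℕ => (a:ℤ) - W) (fun y : ℤ => (y + W).toNat)
        · intro a ha
          simp only [Finset.mem_range] at ha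
          simp only [Finset.mem_Icc]
          omega
        · intro y hy
          simp only [Finset.mem_Icc] at hy
          simp only [Finset.mem_range]
          omega
        · intro a ha; simp only [Finset.mem_range] at ha; omega
        · intro y hy; simp only [Finset.mem_Icc] at hy; omega
        · intro a ha; rfl
      have e2 : ∑ b ∈ Finset.range (W+1), h ((W:ℤ) - b) = ∑ y ∈ Finset.Icc (0:ℤ) W, h y := by
        apply Finset.sum_nbij' (fun b : ℕ => (W:ℤ) - b) (fun y : ℤ => ((W:ℤ) - y).toNat)
        · intro a ha
          simp only [Finset.mem_range] at ha
          simp only [Finset.mem_Icc]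
          omega
        · intro y hy
          simp only [Finset.mem_Icc] at hy
          simp only [Finset.mem_range]
          omega
        · intro a ha; simp only [Finset.mem_range] at ha; omega
        · intro y hy; simp only [Finset.mem_Icc] at hy; omega
        · intro a ha; rfl
      rw [e1, e2, ← Finset.sum_union (by
        rw [Finset.disjoint_left]
        intro y hy hy'
        simp only [Finset.mem_Icc] at hy hy'
        omega)]
      apply Finset.sum_congr _ (fun _ _ => rfl)
      ext y
      simp only [Finset.mem_union, Finset.mem_Icc]
      omega
    -- RHS step
    have hR : ∑ y ∈ Finset.Icc (-((W:ℤ)+1)) ((W:ℤ)+1), (gg (W+1) y : ℂ) * h y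
        = (∑ y ∈ Finset.Icc (-(W:ℤ)) W, (gg W y : ℂ) * h y) + ∑ y ∈ Finset.Icc (-(W:ℤ)) W, h y := by
      have hsub : Finset.Icc (-(W:ℤ)) W ⊆ Finset.Icc (-((W:ℤ)+1)) ((W:ℤ)+1) := by
        intro y hy
        simp only [Finset.mem_Icc] at hy ⊢
        omega
      have hext : ∑ y ∈ Finset.Icc (-(W:ℤ)) W, (gg W y : ℂ) * h y
          = ∑ y ∈ Finset.Icc (-((W:ℤ)+1)) ((W:ℤ)+1), (gg W y : ℂ) * h y := by
        apply Finset.sum_subset hsub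
        intro y hy hy'
        simp only [Finset.mem_Icc] at hy hy'
        rw [gg_zero_of W y (by rcases abs_cases y with ⟨h1,h2⟩|⟨h1,h2⟩ <;> omega)]
        simp
      have hext2 : ∑ y ∈ Finset.Icc (-(W:ℤ)) W, h y
          = ∑ y ∈ Finset.Icc (-((W:ℤ)+1)) ((W:ℤ)+1), (if y ∈ Finset.Icc (-(W:ℤ)) W then (1:ℂ) else 0) * h y := by
        simp only [ite_mul, one_mul, zero_mul]
        rw [Finset.sum_ite_mem, Finset.inter_eq_right.2 hsub]
      rw [hext, hext2, ← Finset.sum_add_distrib]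
      apply Finset.sum_congr rfl
      intro y hy
      simp only [Finset.mem_Icc] at hy
      have : (gg (W+1) y : ℂ) = (gg W y : ℂ) + (if y ∈ Finset.Icc (-(W:ℤ)) W then (1:ℂ) else 0) := by
        split_ifs with hmem
        · simp only [Finset.mem_Icc] at hmem
          have : ((((W:ℕ)+1):ℤ) - |y|).toNat = ((W:ℤ) - |y|).toNat + 1 := by
            rcases abs_cases y with ⟨h1,h2⟩|⟨h1,h2⟩ <;> omega
          unfold gg
          push_cast [this]
          ring
        · simp only [Finset.mem_Icc, not_and_or, not_le] at hmem
          have h1 : gg (W+1) y = 0 := gg_zero_of _ _ (by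
            rcases abs_cases y with ⟨ha1,ha2⟩|⟨ha1,ha2⟩ <;> push_cast <;> omega)
          have h2 : gg W y = 0 := gg_zero_of _ _ (by
            rcases abs_cases y with ⟨ha1,ha2⟩|⟨ha1,ha2⟩ <;> omega)
          rw [h1, h2]
          simp
      rw [this]
      ring
    rw [hL, ih, hnew, show (-((W:ℕ)+1:ℤ)) = -(((W+1):ℕ):ℤ) by push_cast; ring] at *
    rw [show ((W:ℤ)+1) = (((W+1):ℕ):ℤ) by push_cast; ring] at hR
    rw [hR]
lemma fejer_expand (W V : ℕ) (hWV : W ≤ V) (θ : ℝ) :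
    ((‖∑ y ∈ Finset.range W, ee (θ * y)‖^2 : ℝ) : ℂ)
      = ∑ y ∈ Finset.Icc (-(V:ℤ)) V, (gg W y : ℂ) * ee (θ * y) := by
  set E := ∑ y ∈ Finset.range W, ee (θ * y) with hE
  have h1 : ((‖E‖^2 : ℝ) : ℂ) = E * (starRingEnd ℂ) E := by
    rw [Complex.mul_conj]
    norm_cast
    rw [Complex.sq_norm]
  have h2 : E * (starRingEnd ℂ) E
      = ∑ a ∈ Finset.range W, ∑ b ∈ Finset.range W, ee (θ * ((a:ℤ) - (b:ℤ) : ℤ)) := by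
    rw [hE, map_sum, Finset.sum_mul]
    refine Finset.sum_congr rfl fun a _ => ?_
    rw [Finset.mul_sum]
    refine Finset.sum_congr rfl fun bb _ => ?_
    rw [conj_ee, ← ee_add]
    congr 1
    push_cast
    ring
  have h3 := pair_count (fun y : ℤ => ee (θ * y)) W
  have h4 : ∑ y ∈ Finset.Icc (-(W:ℤ)) W, (gg W y : ℂ) * ee (θ * y)
      = ∑ y ∈ Finset.Icc (-(V:ℤ)) V, (gg W y : ℂ) * ee (θ * y) := by
    apply Finset.sum_subset
    · intro y hy
      simp only [Finset.mem_Icc] at hy ⊢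
      omega
    · intro y hy hy'
      simp only [Finset.mem_Icc] at hy hy'
      rw [gg_zero_of W y (by rcases abs_cases y with ⟨ha1,ha2⟩|⟨ha1,ha2⟩ <;> omega)]
      simp
  rw [h1, h2, h3, h4]
section Multi

variable {m : ℕ}

/-- the piBox of integer vectors with coordinates in `[-V, V]` -/
def piBox (m V : ℕ) : Finset (Fin m → ℤ) := Fintype.piFinset fun _ => Finset.Icc (-(V:ℤ)) V

def ww (W : ℕ) (n : Fin m → ℤ) : ℝ := ∏ i, gg W (n i)

def freq (A : Fin m → ℝ) (n : Fin m → ℤ) : ℝ := ∑ i, (n i : ℝ) * A i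

lemma ww_nonneg (W : ℕ) (n : Fin m → ℤ) : 0 ≤ ww W n :=
  Finset.prod_nonneg fun i _ => gg_nonneg W (n i)

lemma ww_zero_of (W : ℕ) (n : Fin m → ℤ) (i : Fin m) (h : (W:ℤ) ≤ |n i|) : ww W n = 0 :=
  Finset.prod_eq_zero (Finset.mem_univ i) (gg_zero_of W (n i) h)

lemma mem_piBox {V : ℕ} {n : Fin m → ℤ} : n ∈ piBox m V ↔ ∀ i, |n i| ≤ (V:ℤ) := by
  unfold piBox
  rw [Fintype.mem_piFinset]
  apply forall_congr'
  intro i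
  rw [Finset.mem_Icc, abs_le]

def CW (A : Fin m → ℝ) (W : ℕ) : ℝ :=
  ∑ n ∈ piBox m W, if freq A n = 0 then ww W n else 0

def SW (A : Fin m → ℝ) (W : ℕ) (β : ℝ) : ℝ :=
  ∑ n ∈ piBox m W, if freq A n + β = 0 then ww W n else 0

lemma ite_ww_zero (A : Fin m → ℝ) (W V : ℕ) (hWV : W ≤ V) (β : ℝ) {n : Fin m → ℤ}
    (hn : n ∈ piBox m V) (hn' : n ∉ piBox m W) : (if freq A n + β = 0 then ww W n else 0) = 0 := by
  obtain ⟨i, hi⟩ : ∃ i, (W:ℤ) < |n i| := by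
    by_contra hcon
    push_neg at hcon
    exact hn' (mem_piBox.2 fun i => hcon i)
  rw [ww_zero_of W n i hi.le]
  simp

lemma SW_eq_piBox (A : Fin m → ℝ) (W V : ℕ) (hWV : W ≤ V) (β : ℝ) :
    SW A W β = ∑ n ∈ piBox m V, if freq A n + β = 0 then ww W n else 0 := by
  apply Finset.sum_subset
  · intro n hn
    rw [mem_piBox] at hn ⊢
    intro i
    exact (hn i).trans (by exact_mod_cast Nat.cast_le.2 hWV)
  · intro n hn hn'
    exact ite_ww_zero A W V hWV β hn hn'

lemma CW_eq_SW (A : Fin m → ℝ) (W : ℕ) : CW A W = SW A W 0 := by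
  unfold CW SW
  refine Finset.sum_congr rfl fun n _ => ?_
  rw [add_zero]

lemma CW_eq_piBox (A : Fin m → ℝ) (W V : ℕ) (hWV : W ≤ V) :
    CW A W = ∑ n ∈ piBox m V, if freq A n = 0 then ww W n else 0 := by
  rw [CW_eq_SW, SW_eq_piBox A W V hWV 0]
  refine Finset.sum_congr rfl fun n _ => ?_
  rw [add_zero]

lemma CW_mono (A : Fin m → ℝ) (W : ℕ) : CW A W ≤ CW A (W+1) := by
  rw [CW_eq_piBox A W (W+1) (by omega)]
  unfold CW
  apply Finset.sum_le_sum
  intro n _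
  split_ifs
  · exact Finset.prod_le_prod (fun i _ => gg_nonneg W (n i)) (fun i _ => gg_mono W (n i))
  · exact le_refl 0

lemma ite_ww_nonneg (P : Prop) [Decidable P] (W : ℕ) (n : Fin m → ℤ) :
    0 ≤ (if P then ww W n else 0) := by
  split_ifs
  · exact ww_nonneg W n
  · exact le_rfl

lemma CW_one_le (A : Fin m → ℝ) (W : ℕ) (hW : 1 ≤ W) : 1 ≤ CW A W := by
  have h0 : (0 : Fin m → ℤ) ∈ piBox m W := mem_piBox.2 fun i => by simp
  have hfreq : freq A (0 : Fin m → ℤ) = 0 := by simp [freq]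
  have hterm : (1:ℝ) ≤ (if freq A (0 : Fin m → ℤ) = 0 then ww W (0 : Fin m → ℤ) else 0) := by
    rw [if_pos hfreq]
    unfold ww
    calc (1:ℝ) = ∏ _i : Fin m, 1 := by simp
      _ ≤ ∏ i : Fin m, gg W ((0 : Fin m → ℤ) i) := by
          apply Finset.prod_le_prod (fun _ _ => zero_le_one)
          intro i _
          show (1:ℝ) ≤ gg W 0
          rw [gg_self_zero]
          exact_mod_cast hW
  refine le_trans hterm (Finset.single_le_sum (f := fun n => if freq A n = 0 then ww W n else 0)
    (fun n _ => ite_ww_nonneg _ W n) h0)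

lemma CW_nonneg (A : Fin m → ℝ) (W : ℕ) : 0 ≤ CW A W :=
  Finset.sum_nonneg fun n _ => ite_ww_nonneg _ W n

lemma SW_nonneg (A : Fin m → ℝ) (W : ℕ) (β : ℝ) : 0 ≤ SW A W β :=
  Finset.sum_nonneg fun n _ => ite_ww_nonneg _ W n

lemma CW_upper (A : Fin m → ℝ) (W : ℕ) : CW A W ≤ ((2*W+1)^m * W^m : ℝ) := by
  have hcard : (piBox m W).card = (2*W+1)^m := by
    unfold piBox
    rw [Fintype.card_piFinset]
    simp only [Int.card_Icc]
    rw [Finset.prod_const, Finset.card_univ, Fintype.card_fin]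
    congr 1
    omega
  have hterm : ∀ n ∈ piBox m W, (if freq A n = 0 then ww W n else 0) ≤ (W^m : ℝ) := by
    intro n _
    split_ifs
    · show ww W n ≤ _
      unfold ww
      calc ∏ i, gg W (n i) ≤ ∏ _i : Fin m, (W:ℝ) :=
            Finset.prod_le_prod (fun i _ => gg_nonneg W (n i)) (fun i _ => gg_le W (n i))
        _ = (W^m : ℝ) := by rw [Finset.prod_const, Finset.card_univ, Fintype.card_fin]
    · positivity

  calc CW A W ≤ (piBox m W).card • (W^m : ℝ) := Finset.sum_le_card_nsmul _ _ _ hterm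
    _ = ((2*W+1)^m * W^m : ℝ) := by rw [hcard, nsmul_eq_mul]; push_cast; ring

lemma sum_shiftBT (h : (Fin m → ℤ) → ℝ) (V : ℕ) (u : Fin m → ℤ)
    (hu : ∀ i, |u i| ≤ 1) (hsupp : ∀ n, h n ≠ 0 → ∀ i, |n i| ≤ (V:ℤ)) :
    ∑ n ∈ piBox m (V+1), h (n - u) = ∑ n ∈ piBox m V, h n := by
  rw [← Finset.sum_image (g := fun n : Fin m → ℤ => n - u) (f := h)
    (fun x _ y _ hxy => by
      have := congrArg (· + u) hxy
      simpa using this)]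
  symm
  apply Finset.sum_subset
  · intro n hn
    rw [Finset.mem_image]
    refine ⟨n + u, ?_, by simp⟩
    rw [mem_piBox] at hn ⊢
    intro i
    have h1 := hn i
    have h2 := hu i
    have := abs_add_le (n i) (u i)
    simp only [Pi.add_apply]
    push_cast
    omega
  · intro n hn hn'
    by_contra hne
    obtain ⟨i, hi⟩ : ∃ i, (V:ℤ) < |n i| := by
      by_contra hcon
      push_neg at hcon
      exact hn' (mem_piBox.2 fun i => hcon i)
    exact absurd (hsupp n hne i) (by omega)

lemma freq_sub_single (A : Fin m → ℝ) (n : Fin m → ℤ) (i : Fin m) (σ : ℤ) :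
    freq A (n - (Pi.single i σ : Fin m → ℤ)) = freq A n - (σ:ℝ) * A i := by
  unfold freq
  have h1 : ∀ j, (((n - (Pi.single i σ : Fin m → ℤ)) j : ℤ):ℝ) * A j
      = (n j : ℝ) * A j - (((Pi.single i σ : Fin m → ℤ) j : ℤ):ℝ) * A j := by
    intro j
    simp only [Pi.sub_apply]
    push_cast
    ring
  rw [Finset.sum_congr rfl fun j _ => h1 j, Finset.sum_sub_distrib]
  congr 1
  rw [Finset.sum_eq_single i]
  · simp
  · intro j _ hji
    rw [Pi.single_eq_of_ne hji]
    simp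
  · intro h
    exact absurd (Finset.mem_univ i) h

end Multi

section Multi2

variable {m : ℕ}

lemma ww_shift_low (W : ℕ) (n : Fin m → ℤ) (i : Fin m) (σ : ℤ) (hσ : |σ| ≤ 1) :
    ww (W-1) n ≤ ww W (n - (Pi.single i σ : Fin m → ℤ)) := by
  unfold ww
  apply Finset.prod_le_prod (fun j _ => gg_nonneg _ _)
  intro j _
  simp only [Pi.sub_apply]
  by_cases hji : j = i
  · subst hji
    rw [Pi.single_eq_same]
    exact gg_shift_low W (n j) σ hσ
  · rw [Pi.single_eq_of_ne hji]
    simpa using gg_shift_low W (n j) 0 (by simp)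

lemma ww_shift_high (W : ℕ) (n : Fin m → ℤ) (i : Fin m) (σ : ℤ) (hσ : |σ| ≤ 1) :
    ww W (n - (Pi.single i σ : Fin m → ℤ)) ≤ ww (W+1) n := by
  unfold ww
  apply Finset.prod_le_prod (fun j _ => gg_nonneg _ _)
  intro j _
  simp only [Pi.sub_apply]
  by_cases hji : j = i
  · subst hji
    rw [Pi.single_eq_same]
    exact gg_shift_high W (n j) σ hσ
  · rw [Pi.single_eq_of_ne hji]
    simpa using gg_shift_high W (n j) 0 (by simp)

lemma ww_ne_zero_bound {W : ℕ} {n : Fin m → ℤ} (h : ww W n ≠ 0) : ∀ i, |n i| ≤ (W:ℤ) := by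
  intro i
  by_contra hc
  exact h (ww_zero_of W n i (by omega))

/-- the shifted sum equals a translated sum over the bigger box -/
lemma SW_translated (A : Fin m → ℝ) (W : ℕ) (i : Fin m) (σ : ℤ) (hσ : |σ| ≤ 1) :
    SW A W ((σ:ℝ) * A i)
      = ∑ n ∈ piBox m (W+1), if freq A n = 0
          then ww W (n - (Pi.single i σ : Fin m → ℤ)) else 0 := by
  unfold SW
  rw [← sum_shiftBT (fun n => if freq A n + (σ:ℝ) * A i = 0 then ww W n else 0) W
    (Pi.single i σ : Fin m → ℤ)
    (fun j => by
      by_cases hji : j = i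
      · subst hji; rw [Pi.single_eq_same]; exact hσ
      · rw [Pi.single_eq_of_ne hji]; simp)
    (fun n hne j => by
      have hw : ww W n ≠ 0 := by
        intro h0
        exact hne (by simp [h0])
      exact ww_ne_zero_bound hw j)]
  refine Finset.sum_congr rfl fun n _ => ?_
  rw [freq_sub_single]
  have hiff : (freq A n - (σ:ℝ) * A i + (σ:ℝ) * A i = 0) ↔ (freq A n = 0) := by
    constructor <;> intro h <;> linarith
  exact if_congr hiff rfl rfl

lemma S_lower (A : Fin m → ℝ) (W : ℕ) (i : Fin m) (σ : ℤ) (hσ : |σ| ≤ 1) :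
    CW A (W-1) ≤ SW A W ((σ:ℝ) * A i) := by
  rw [SW_translated A W i σ hσ, CW_eq_piBox A (W-1) (W+1) (by omega)]
  apply Finset.sum_le_sum
  intro n _
  split_ifs
  · exact ww_shift_low W n i σ hσ
  · exact le_rfl

lemma S_upper (A : Fin m → ℝ) (W : ℕ) (i : Fin m) (σ : ℤ) (hσ : |σ| ≤ 1) :
    SW A W ((σ:ℝ) * A i) ≤ CW A (W+1) := by
  rw [SW_translated A W i σ hσ]
  unfold CW
  apply Finset.sum_le_sum
  intro n _
  split_ifs
  · exact ww_shift_high W n i σ hσ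
  · exact le_rfl

lemma ee_sum {ι : Type*} (s : Finset ι) (θ : ι → ℝ) :
    ee (∑ i ∈ s, θ i) = ∏ i ∈ s, ee (θ i) := by
  unfold ee
  rw [← Complex.exp_sum]
  congr 1
  push_cast
  rw [Finset.mul_sum, Finset.sum_mul]

/-- expansion of the product Fejér kernel -/
lemma P_expand (W : ℕ) (A : Fin m → ℝ) (x : ℝ) :
    ((∏ i, ‖∑ y ∈ Finset.range W, ee (A i * x * y)‖^2 : ℝ) : ℂ)
      = ∑ n ∈ piBox m W, (ww W n : ℂ) * ee (freq A n * x) := by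
  rw [Complex.ofReal_prod]
  have h1 : ∀ i : Fin m, ((‖∑ y ∈ Finset.range W, ee (A i * x * y)‖^2 : ℝ) : ℂ)
      = ∑ y ∈ Finset.Icc (-(W:ℤ)) W, (gg W y : ℂ) * ee (A i * x * y) :=
    fun i => fejer_expand W W le_rfl (A i * x)
  rw [Finset.prod_congr rfl fun i _ => h1 i]
  rw [Finset.prod_univ_sum]
  refine Finset.sum_congr rfl fun n hn => ?_
  rw [Finset.prod_mul_distrib]
  congr 1
  · rw [← Complex.ofReal_prod]
    rfl
  · rw [← ee_sum]
    congr 1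
    unfold freq
    rw [Finset.sum_mul]
    refine Finset.sum_congr rfl fun i _ => ?_
    ring

end Multi2

section Growth

variable {m : ℕ}

lemma exists_good_W (A : Fin m → ℝ) (δ : ℝ) (hδ : 0 < δ) :
    ∃ W : ℕ, 1 ≤ W ∧ CW A (W+1) - CW A (W-1) ≤ δ * CW A W := by
  by_contra hcon
  push_neg at hcon
  have hstep : ∀ W : ℕ, 1 ≤ W → (1+δ) * CW A (W-1) < CW A (W+1) := by
    intro W hW
    have h1 := hcon W hW
    have h2 : CW A (W-1) ≤ CW A W := by
      have := CW_mono A (W-1)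
      rwa [show W - 1 + 1 = W by omega] at this
    nlinarith [CW_nonneg A (W-1)]
  have hgrow : ∀ s : ℕ, (1+δ)^s ≤ CW A (2*s+1) := by
    intro s
    induction s with
    | zero => simpa using CW_one_le A 1 le_rfl
    | succ s ih =>
      have h1 := hstep (2*s+2) (by omega)
      rw [show 2*s+2-1 = 2*s+1 by omega, show 2*s+2+1 = 2*(s+1)+1 by omega] at h1
      calc (1+δ)^(s+1) = (1+δ) * (1+δ)^s := by ring
        _ ≤ (1+δ) * CW A (2*s+1) := by nlinarith
        _ ≤ CW A (2*(s+1)+1) := h1.le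
  have hpoly : ∀ s : ℕ, 1 ≤ s → (1+δ)^s ≤ (7:ℝ)^(2*m) * (s:ℝ)^(2*m) := by
    intro s hs
    refine (hgrow s).trans ?_
    refine (CW_upper A (2*s+1)).trans ?_
    have hs1 : (1:ℝ) ≤ (s:ℝ) := by exact_mod_cast hs
    have h1 : (2*((2*s+1):ℕ)+1 : ℝ) ≤ 7*(s:ℝ) := by push_cast; linarith
    have h2 : (((2*s+1):ℕ) : ℝ) ≤ 7*(s:ℝ) := by push_cast; linarith
    have h3 : (0:ℝ) ≤ 2*((2*s+1):ℕ)+1 := by positivity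
    have h4 : (0:ℝ) ≤ (((2*s+1):ℕ):ℝ) := by positivity
    calc (2*((2*s+1):ℕ)+1 : ℝ)^m * (((2*s+1):ℕ):ℝ)^m
        ≤ (7*(s:ℝ))^m * (7*(s:ℝ))^m := by
          apply mul_le_mul (pow_le_pow_left₀ h3 h1 m) (pow_le_pow_left₀ h4 h2 m)
            (by positivity) (by positivity)
      _ = (7:ℝ)^(2*m) * (s:ℝ)^(2*m) := by
          rw [mul_pow, two_mul, pow_add, pow_add]
          ring
  have hδ1 : (1:ℝ) < 1 + δ := by linarith
  have hten := tendsto_pow_const_div_const_pow_of_one_lt (2*m) hδ1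
  have hε₀ : (0:ℝ) < ((7:ℝ)^(2*m))⁻¹ := by positivity
  have hev := (hten.eventually (gt_mem_nhds hε₀)).and (Filter.eventually_ge_atTop 1)
  obtain ⟨s, hlt, hs1⟩ := hev.exists
  have hp : (0:ℝ) < (1+δ)^s := by positivity
  have hspow : (1:ℝ) ≤ (s:ℝ)^(2*m) := one_le_pow₀ (by exact_mod_cast hs1)
  have hle := hpoly s hs1
  rw [div_lt_iff₀ hp] at hlt
  have h5 : ((7:ℝ)^(2*m))⁻¹ * (1+δ)^s ≤ ((7:ℝ)^(2*m))⁻¹ * ((7:ℝ)^(2*m) * (s:ℝ)^(2*m)) :=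
    mul_le_mul_of_nonneg_left hle (le_of_lt hε₀)
  rw [← mul_assoc, inv_mul_cancel₀ (by positivity), one_mul] at h5
  linarith

end Growth

section Core

lemma ee_cos (y : ℝ) : Complex.cos (2 * (Real.pi:ℂ) * ((y:ℝ):ℂ)) = (ee y + ee (-y))/2 := by
  rw [show 2 * (Real.pi:ℂ) * ((y:ℝ):ℂ) = ((2 * Real.pi * y : ℝ):ℂ) by push_cast; ring,
    ← Complex.ofReal_cos]
  unfold ee
  rw [show 2 * (Real.pi:ℂ) * ((y:ℝ):ℂ) * Complex.I = ((2 * Real.pi * y : ℝ):ℂ) * Complex.I by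
    push_cast; ring]
  rw [show 2 * (Real.pi:ℂ) * ((-y:ℝ):ℂ) * Complex.I = (-((2 * Real.pi * y : ℝ):ℂ)) * Complex.I by
    push_cast; ring]
  rw [Complex.exp_mul_I, Complex.exp_mul_I, Complex.cos_neg, Complex.sin_neg]
  push_cast
  ring

lemma BT_main (m : ℕ) (A B : Fin m → ℝ)
    (hkey : ∀ n : Fin m → ℤ, ∀ q : ℤ, freq A n = (q:ℝ) → freq A n = 0)
    (t c : ℝ) (hc : ∀ k : ℤ, c ≤ ∑ i, B i * Real.cos (2 * Real.pi * A i * k))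
    (ε : ℝ) (hε : 0 < ε) :
    c ≤ (∑ i, B i * Real.cos (2 * Real.pi * A i * t)) + ε := by
  classical
  set B₀ : ℝ := ∑ i, |B i| with hB₀def
  have hB₀ : 0 ≤ B₀ := Finset.sum_nonneg fun i _ => abs_nonneg _
  set δ : ℝ := ε / (B₀ + 1) with hδdef
  have hδ : 0 < δ := div_pos hε (by linarith)
  obtain ⟨W, hW1, hWgood⟩ := exists_good_W A δ hδ
  -- key frequency facts
  have hkey0 : ∀ n : Fin m → ℤ, ∀ q : ℤ, freq A n * 1 = (q:ℝ) → freq A n * 1 = 0 := by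
    intro n q h
    rw [mul_one] at h ⊢
    exact hkey n q h
  have hkeyshift : ∀ (n : Fin m → ℤ) (i : Fin m) (σ : ℤ), ∀ q : ℤ,
      freq A n + (σ:ℝ) * A i = (q:ℝ) → freq A n + (σ:ℝ) * A i = 0 := by
    intro n i σ q h
    have h2 : freq A (n - (Pi.single i (-σ) : Fin m → ℤ)) = freq A n + (σ:ℝ) * A i := by
      rw [freq_sub_single]
      push_cast
      ring
    rw [← h2] at h ⊢
    exact hkey _ q h
  -- the functions
  set FF : ℝ → ℝ := fun x => ∑ i, B i * Real.cos (2 * Real.pi * A i * x) with hFFdef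
  set P : ℝ → ℝ := fun x => ∏ i, ‖∑ y ∈ Finset.range W, ee (A i * (x - t) * y)‖^2 with hPdef
  have hP0 : ∀ x, 0 ≤ P x := fun x => Finset.prod_nonneg fun i _ => by positivity
  have hPC : ∀ x : ℝ, ((P x : ℝ):ℂ) = ∑ n ∈ piBox m W, (ww W n:ℂ) * ee (freq A n * (x - t)) :=
    fun x => P_expand W A (x - t)
  -- the averages
  set u : ℕ → ℝ := fun K => (2*(K:ℝ)+1)⁻¹ * ∑ k ∈ Finset.Icc (-(K:ℤ)) K, P k with hudef
  set v : ℕ → ℝ := fun K => (2*(K:ℝ)+1)⁻¹ * ∑ k ∈ Finset.Icc (-(K:ℤ)) K, FF k * P k with hvdef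
  have hcastinv : ∀ K : ℕ, (((2*(K:ℝ)+1)⁻¹ : ℝ):ℂ) = (2*(K:ℂ)+1)⁻¹ := by
    intro K
    push_cast
    ring
  -- u identity
  have hueq : ∀ K : ℕ, ((u K : ℝ):ℂ)
      = ∑ n ∈ piBox m W, ((ww W n:ℂ) * ee (-(freq A n * t))) * Av K (fun k => ee (freq A n * k)) := by
    intro K
    rw [hudef]
    push_cast [hPC]
    rw [Finset.sum_comm, Finset.mul_sum]
    refine Finset.sum_congr rfl fun n _ => ?_
    rw [Av, show (∑ k ∈ Finset.Icc (-(K:ℤ)) K, (ww W n:ℂ) * ee (freq A n * (((k:ℤ):ℝ) - t)))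
        = ((ww W n:ℂ) * ee (-(freq A n * t))) * ∑ k ∈ Finset.Icc (-(K:ℤ)) K, ee (freq A n * ((k:ℤ):ℝ)) from by
      rw [Finset.mul_sum]
      refine Finset.sum_congr rfl fun k _ => ?_
      rw [show freq A n * (((k:ℤ):ℝ) - t) = -(freq A n * t) + freq A n * ((k:ℤ):ℝ) from by ring, ee_add]
      ring]
    ring
  -- u limit
  have hulim : Filter.Tendsto (fun K => ((u K : ℝ):ℂ)) Filter.atTop (nhds ((CW A W : ℝ):ℂ)) := by
    have hterm : ∀ n ∈ piBox m W, Filter.Tendsto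
        (fun K => ((ww W n:ℂ) * ee (-(freq A n * t))) * Av K (fun k => ee (freq A n * k)))
        Filter.atTop (nhds (((ww W n:ℂ) * ee (-(freq A n * t))) * (if freq A n = 0 then 1 else 0))) := by
      intro n _
      exact (tendsto_Av_ee (freq A n) (fun q hq => hkey n q hq)).const_mul _
    have h1 := tendsto_finset_sum (piBox m W) hterm
    have h2 : ∑ n ∈ piBox m W, ((ww W n:ℂ) * ee (-(freq A n * t))) * (if freq A n = 0 then 1 else 0)
        = ((CW A W : ℝ):ℂ) := by
      rw [CW_eq_piBox A W W le_rfl]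
      push_cast
      refine Finset.sum_congr rfl fun n _ => ?_
      by_cases h : freq A n = 0
      · rw [if_pos h, if_pos h, h]
        simp [ee_zero]
      · rw [if_neg h, if_neg h]
        simp
    rw [h2] at h1
    exact Filter.Tendsto.congr (fun K => (hueq K).symm) h1
  have hu : Filter.Tendsto u Filter.atTop (nhds (CW A W)) := by
    have := (Complex.continuous_re.tendsto _).comp hulim
    exact this
  -- FF * P identity
  have hFPC : ∀ x : ℝ, ((FF x : ℝ):ℂ) * ((P x : ℝ):ℂ)
      = ∑ i, ∑ n ∈ piBox m W, ((B i:ℂ)/2 * (ww W n:ℂ) * ee (-(freq A n * t)))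
          * (ee ((freq A n + A i) * x) + ee ((freq A n - A i) * x)) := by
    intro x
    rw [hPC]
    have hFFC : ((FF x : ℝ):ℂ) = ∑ i, (B i:ℂ) * ((ee (A i * x) + ee (-(A i * x)))/2) := by
      rw [hFFdef]
      push_cast
      refine Finset.sum_congr rfl fun i _ => ?_
      rw [show 2 * (Real.pi:ℂ) * ((A i : ℝ):ℂ) * ((x:ℝ):ℂ)
          = 2 * (Real.pi:ℂ) * ((A i * x : ℝ):ℂ) by push_cast; ring, ee_cos]
    rw [hFFC, Finset.sum_mul_sum]
    refine Finset.sum_congr rfl fun i _ => Finset.sum_congr rfl fun n _ => ?_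
    have e1 : ee (A i * x) * ee (freq A n * (x - t))
        = ee (-(freq A n * t)) * ee ((freq A n + A i) * x) := by
      rw [← ee_add, ← ee_add]
      congr 1
      ring
    have e2 : ee (-(A i * x)) * ee (freq A n * (x - t))
        = ee (-(freq A n * t)) * ee ((freq A n - A i) * x) := by
      rw [← ee_add, ← ee_add]
      congr 1
      ring
    linear_combination ((B i:ℂ)/2 * (ww W n:ℂ)) * e1 + ((B i:ℂ)/2 * (ww W n:ℂ)) * e2
  -- v identity
  have hveq : ∀ K : ℕ, ((v K : ℝ):ℂ)
      = ∑ i, ∑ n ∈ piBox m W, ((B i:ℂ)/2 * (ww W n:ℂ) * ee (-(freq A n * t)))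
          * (Av K (fun k => ee ((freq A n + A i) * k)) + Av K (fun k => ee ((freq A n - A i) * k))) := by
    intro K
    rw [hvdef]
    push_cast
    simp only [hFPC]
    simp only [Finset.mul_sum]
    rw [Finset.sum_comm]
    refine Finset.sum_congr rfl fun i _ => ?_
    rw [Finset.sum_comm]
    refine Finset.sum_congr rfl fun n _ => ?_
    rw [Av, Av]
    calc ∑ k ∈ Finset.Icc (-(K:ℤ)) K, (2*(K:ℂ)+1)⁻¹ * ((B i:ℂ)/2 * (ww W n:ℂ) * ee (-(freq A n * t))
            * (ee ((freq A n + A i) * ((k:ℤ):ℝ)) + ee ((freq A n - A i) * ((k:ℤ):ℝ))))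
        = ∑ k ∈ Finset.Icc (-(K:ℤ)) K,
            ((2*(K:ℂ)+1)⁻¹ * ((B i:ℂ)/2 * (ww W n:ℂ) * ee (-(freq A n * t))) * ee ((freq A n + A i) * ((k:ℤ):ℝ))
              + (2*(K:ℂ)+1)⁻¹ * ((B i:ℂ)/2 * (ww W n:ℂ) * ee (-(freq A n * t))) * ee ((freq A n - A i) * ((k:ℤ):ℝ))) := by
          refine Finset.sum_congr rfl fun k _ => ?_
          ring
      _ = (2*(K:ℂ)+1)⁻¹ * ((B i:ℂ)/2 * (ww W n:ℂ) * ee (-(freq A n * t)))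
            * (∑ k ∈ Finset.Icc (-(K:ℤ)) K, ee ((freq A n + A i) * ((k:ℤ):ℝ)))
          + (2*(K:ℂ)+1)⁻¹ * ((B i:ℂ)/2 * (ww W n:ℂ) * ee (-(freq A n * t)))
            * (∑ k ∈ Finset.Icc (-(K:ℤ)) K, ee ((freq A n - A i) * ((k:ℤ):ℝ))) := by
          rw [Finset.sum_add_distrib, ← Finset.mul_sum, ← Finset.mul_sum]
      _ = (B i:ℂ)/2 * (ww W n:ℂ) * ee (-(freq A n * t))
            * ((2*(K:ℂ)+1)⁻¹ * ∑ k ∈ Finset.Icc (-(K:ℤ)) K, ee ((freq A n + A i) * ((k:ℤ):ℝ))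
              + (2*(K:ℂ)+1)⁻¹ * ∑ k ∈ Finset.Icc (-(K:ℤ)) K, ee ((freq A n - A i) * ((k:ℤ):ℝ))) := by
          ring
  -- v limit
  set LC : ℂ := ∑ i, ∑ n ∈ piBox m W, ((B i:ℂ)/2 * (ww W n:ℂ) * ee (-(freq A n * t)))
      * ((if freq A n + A i = 0 then (1:ℂ) else 0) + (if freq A n - A i = 0 then (1:ℂ) else 0))
      with hLCdef
  have hvlim : Filter.Tendsto (fun K => ((v K : ℝ):ℂ)) Filter.atTop (nhds LC) := by
    have hterm : ∀ i : Fin m, ∀ n ∈ piBox m W, Filter.Tendsto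
        (fun K => ((B i:ℂ)/2 * (ww W n:ℂ) * ee (-(freq A n * t)))
          * (Av K (fun k => ee ((freq A n + A i) * k)) + Av K (fun k => ee ((freq A n - A i) * k))))
        Filter.atTop
        (nhds (((B i:ℂ)/2 * (ww W n:ℂ) * ee (-(freq A n * t)))
          * ((if freq A n + A i = 0 then (1:ℂ) else 0) + (if freq A n - A i = 0 then (1:ℂ) else 0)))) := by
      intro i n _
      have t1 := tendsto_Av_ee (freq A n + A i) (fun q hq => by
        have := hkeyshift n i 1 q (by push_cast; rw [one_mul]; exact hq)
        push_cast at this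
        rw [one_mul] at this
        exact this)
      have t2 := tendsto_Av_ee (freq A n - A i) (fun q hq => by
        have := hkeyshift n i (-1) q (by push_cast; rw [neg_one_mul, ← sub_eq_add_neg]; exact hq)
        push_cast at this
        rw [neg_one_mul, ← sub_eq_add_neg] at this
        exact this)
      exact (t1.add t2).const_mul _
    have h1 := tendsto_finset_sum Finset.univ (fun i _ => tendsto_finset_sum (piBox m W) (hterm i))
    exact Filter.Tendsto.congr (fun K => (hveq K).symm) h1
  have hv : Filter.Tendsto v Filter.atTop (nhds LC.re) := by
    have := (Complex.continuous_re.tendsto _).comp hvlim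
    have heq : ∀ K : ℕ, (((v K : ℝ):ℂ)).re = v K := fun K => Complex.ofReal_re _
    exact Filter.Tendsto.congr (fun K => heq K) this
  -- the inequality c * u K ≤ v K
  have huv : ∀ K : ℕ, c * u K ≤ v K := by
    intro K
    rw [hudef, hvdef]
    simp only
    rw [← mul_assoc, mul_comm c, mul_assoc]
    apply mul_le_mul_of_nonneg_left _ (by positivity)
    rw [Finset.mul_sum]
    apply Finset.sum_le_sum
    intro k _
    exact mul_le_mul_of_nonneg_right (hc k) (hP0 _)
  -- limit inequality
  have hmain : c * CW A W ≤ LC.re :=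
    le_of_tendsto_of_tendsto' (hu.const_mul c) hv huv
  -- compare LC with FF t * CW A W
  have hSW1 : ∀ i : Fin m, |SW A W (A i) - CW A W| ≤ CW A (W+1) - CW A (W-1) := by
    intro i
    have hlo := S_lower A W i 1 (by norm_num)
    have hhi := S_upper A W i 1 (by norm_num)
    push_cast at hlo hhi
    rw [one_mul] at hlo hhi
    have hm1 : CW A (W-1) ≤ CW A W := by
      have := CW_mono A (W-1)
      rwa [show W - 1 + 1 = W by omega] at this
    have hm2 : CW A W ≤ CW A (W+1) := CW_mono A W
    rw [abs_le]
    constructor <;> linarith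
  have hSW2 : ∀ i : Fin m, |SW A W (-(A i)) - CW A W| ≤ CW A (W+1) - CW A (W-1) := by
    intro i
    have hlo := S_lower A W i (-1) (by norm_num)
    have hhi := S_upper A W i (-1) (by norm_num)
    push_cast at hlo hhi
    rw [neg_one_mul] at hlo hhi
    have hm1 : CW A (W-1) ≤ CW A W := by
      have := CW_mono A (W-1)
      rwa [show W - 1 + 1 = W by omega] at this
    have hm2 : CW A W ≤ CW A (W+1) := CW_mono A W
    rw [abs_le]
    constructor <;> linarith
  -- rewrite LC as sum over i with SW
  have hLC2 : LC = ∑ i, ((B i:ℂ)/2) * (ee (A i * t) * ((SW A W (A i) : ℝ):ℂ)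
      + ee (-(A i * t)) * ((SW A W (-(A i)) : ℝ):ℂ)) := by
    rw [hLCdef]
    refine Finset.sum_congr rfl fun i _ => ?_
    have hplus : ∑ n ∈ piBox m W, ((B i:ℂ)/2 * (ww W n:ℂ) * ee (-(freq A n * t)))
        * (if freq A n + A i = 0 then (1:ℂ) else 0)
        = ((B i:ℂ)/2) * (ee (A i * t) * ((SW A W (A i) : ℝ):ℂ)) := by
      rw [show ((SW A W (A i) : ℝ):ℂ) = ∑ n ∈ piBox m W, (if freq A n + A i = 0 then (ww W n:ℂ) else 0) by
        unfold SW
        push_cast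
        refine Finset.sum_congr rfl fun n _ => ?_
        split_ifs <;> simp]
      rw [Finset.mul_sum, Finset.mul_sum]
      refine Finset.sum_congr rfl fun n _ => ?_
      by_cases h : freq A n + A i = 0
      · rw [if_pos h, if_pos h]
        have h' : freq A n = -(A i) := by linarith
        rw [show -(freq A n * t) = A i * t from by rw [h']; ring]
        ring
      · rw [if_neg h, if_neg h]
        ring
    have hminus : ∑ n ∈ piBox m W, ((B i:ℂ)/2 * (ww W n:ℂ) * ee (-(freq A n * t)))
        * (if freq A n - A i = 0 then (1:ℂ) else 0)
        = ((B i:ℂ)/2) * (ee (-(A i * t)) * ((SW A W (-(A i)) : ℝ):ℂ)) := by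
      rw [show ((SW A W (-(A i)) : ℝ):ℂ) = ∑ n ∈ piBox m W, (if freq A n - A i = 0 then (ww W n:ℂ) else 0) by
        unfold SW
        push_cast
        refine Finset.sum_congr rfl fun n _ => ?_
        by_cases h : freq A n - A i = 0
        · rw [if_pos h, if_pos (show freq A n + -A i = 0 from by linarith)]
        · rw [if_neg h, if_neg (show ¬(freq A n + -A i = 0) from fun hcon => h (by linarith))]
          simp]
      rw [Finset.mul_sum, Finset.mul_sum]
      refine Finset.sum_congr rfl fun n _ => ?_
      by_cases h : freq A n - A i = 0
      · rw [if_pos h, if_pos h]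
        have h' : freq A n = A i := by linarith
        rw [show -(freq A n * t) = -(A i * t) from by rw [h']]
        ring
      · rw [if_neg h, if_neg h]
        ring
    calc ∑ n ∈ piBox m W, ((B i:ℂ)/2 * (ww W n:ℂ) * ee (-(freq A n * t)))
          * ((if freq A n + A i = 0 then (1:ℂ) else 0) + (if freq A n - A i = 0 then (1:ℂ) else 0))
        = (∑ n ∈ piBox m W, ((B i:ℂ)/2 * (ww W n:ℂ) * ee (-(freq A n * t)))
            * (if freq A n + A i = 0 then (1:ℂ) else 0))
          + ∑ n ∈ piBox m W, ((B i:ℂ)/2 * (ww W n:ℂ) * ee (-(freq A n * t)))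
            * (if freq A n - A i = 0 then (1:ℂ) else 0) := by
          rw [← Finset.sum_add_distrib]
          exact Finset.sum_congr rfl fun n _ => by ring
      _ = ((B i:ℂ)/2) * (ee (A i * t) * ((SW A W (A i) : ℝ):ℂ)
            + ee (-(A i * t)) * ((SW A W (-(A i)) : ℝ):ℂ)) := by
          rw [hplus, hminus]
          ring
  -- FF t * CW as a complex sum
  have hFtCW : ((FF t * CW A W : ℝ):ℂ)
      = ∑ i, ((B i:ℂ)/2) * (ee (A i * t) * ((CW A W : ℝ):ℂ) + ee (-(A i * t)) * ((CW A W : ℝ):ℂ)) := by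
    rw [Complex.ofReal_mul, hFFdef]
    push_cast
    rw [Finset.sum_mul]
    refine Finset.sum_congr rfl fun i _ => ?_
    rw [show 2 * (Real.pi:ℂ) * ((A i : ℝ):ℂ) * ((t:ℝ):ℂ)
        = 2 * (Real.pi:ℂ) * ((A i * t : ℝ):ℂ) by push_cast; ring, ee_cos]
    ring
  -- the norm bound
  have hclose : LC.re ≤ FF t * CW A W + B₀ * (CW A (W+1) - CW A (W-1)) := by
    have hdiff : ‖LC - ((FF t * CW A W : ℝ):ℂ)‖ ≤ B₀ * (CW A (W+1) - CW A (W-1)) := by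
      rw [hLC2, hFtCW, ← Finset.sum_sub_distrib]
      refine le_trans (norm_sum_le _ _) ?_
      rw [hB₀def, Finset.sum_mul]
      apply Finset.sum_le_sum
      intro i _
      rw [show ((B i:ℂ)/2) * (ee (A i * t) * ((SW A W (A i) : ℝ):ℂ) + ee (-(A i * t)) * ((SW A W (-(A i)) : ℝ):ℂ))
          - ((B i:ℂ)/2) * (ee (A i * t) * ((CW A W : ℝ):ℂ) + ee (-(A i * t)) * ((CW A W : ℝ):ℂ))
          = ((B i:ℂ)/2) * (ee (A i * t) * (((SW A W (A i) : ℝ):ℂ) - ((CW A W : ℝ):ℂ))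
            + ee (-(A i * t)) * (((SW A W (-(A i)) : ℝ):ℂ) - ((CW A W : ℝ):ℂ))) from by ring]
      rw [norm_mul]
      have h1 : ‖ee (A i * t) * (((SW A W (A i) : ℝ):ℂ) - ((CW A W : ℝ):ℂ))
          + ee (-(A i * t)) * (((SW A W (-(A i)) : ℝ):ℂ) - ((CW A W : ℝ):ℂ))‖
          ≤ (CW A (W+1) - CW A (W-1)) + (CW A (W+1) - CW A (W-1)) := by
        refine le_trans (norm_add_le _ _) ?_
        apply add_le_add
        · rw [norm_mul, norm_ee, one_mul, ← Complex.ofReal_sub, Complex.norm_real]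
          exact hSW1 i
        · rw [norm_mul, norm_ee, one_mul, ← Complex.ofReal_sub, Complex.norm_real]
          exact hSW2 i
      have h2 : ‖(B i:ℂ)/2‖ = |B i|/2 := by
        rw [norm_div, Complex.norm_real, Real.norm_eq_abs]
        norm_num
      rw [h2]
      refine le_trans (mul_le_mul_of_nonneg_left h1 (by positivity)) (le_of_eq (by ring))
    have hre : LC.re - FF t * CW A W ≤ ‖LC - ((FF t * CW A W : ℝ):ℂ)‖ := by
      have := Complex.abs_re_le_norm (LC - ((FF t * CW A W : ℝ):ℂ))
      rw [Complex.sub_re, Complex.ofReal_re] at this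
      calc LC.re - FF t * CW A W ≤ |LC.re - FF t * CW A W| := le_abs_self _
        _ ≤ _ := by exact this
    linarith
  -- final arithmetic
  have hCW1 : (1:ℝ) ≤ CW A W := CW_one_le A W hW1
  have hfinal : c * CW A W ≤ FF t * CW A W + B₀ * (δ * CW A W) := by
    have h1 : B₀ * (CW A (W+1) - CW A (W-1)) ≤ B₀ * (δ * CW A W) :=
      mul_le_mul_of_nonneg_left hWgood hB₀
    linarith
  have hc2 : c ≤ FF t + B₀ * δ := by
    by_contra hcc
    push_neg at hcc
    nlinarith [hfinal, hCW1]
  have hlast : B₀ * δ ≤ ε := by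
    rw [hδdef, show B₀ * (ε / (B₀ + 1)) = B₀ * ε / (B₀ + 1) from by ring,
      div_le_iff₀ (by linarith : (0:ℝ) < B₀ + 1)]
    nlinarith
  calc c ≤ FF t + B₀ * δ := hc2
    _ ≤ FF t + ε := by linarith
  -- FF t is definitionally the sum

end Core

end BT

/-- **Theorem 5 (Beukers–Tijdeman): the continuous case.**
Let `b 1, …, b m` and `α 1, …, α m` be real numbers such that the `ℚ`-linear span of
`α 1, …, α m` does not contain `1`.  Then the infimum over integers `k` of
`∑ j, b j * cos (2π α j k)` equals the infimum over real `t` of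
`∑ j, b j * cos (2π α j t)`. -/
theorem cosine_inf_integer_eq_inf_real
    (m : ℕ) (hm : 1 ≤ m) (b α : ℕ → ℝ)
    (hspan : (1 : ℝ) ∉ Submodule.span ℚ (α '' Set.Icc 1 m)) :
    (⨅ k : ℤ, ∑ j ∈ Finset.Icc 1 m, b j * Real.cos (2 * Real.pi * α j * k)) =
      ⨅ t : ℝ, ∑ j ∈ Finset.Icc 1 m, b j * Real.cos (2 * Real.pi * α j * t) := by
  classical
  set AA : Fin m → ℝ := fun i => α (1 + (i:ℕ)) with hAAdef
  set BB : Fin m → ℝ := fun i => b (1 + (i:ℕ)) with hBBdef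
  have hsum : ∀ x : ℝ, ∑ j ∈ Finset.Icc 1 m, b j * Real.cos (2 * Real.pi * α j * x)
      = ∑ i : Fin m, BB i * Real.cos (2 * Real.pi * AA i * x) := by
    intro x
    rw [show Finset.Icc 1 m = Finset.Ico 1 (m+1) from by rw [Finset.Ico_add_one_right_eq_Icc]]
    rw [Finset.sum_Ico_eq_sum_range]
    rw [show m + 1 - 1 = m by omega]
    rw [← Fin.sum_univ_eq_sum_range (fun i => b (1 + i) * Real.cos (2 * Real.pi * α (1 + i) * x)) m]
  -- the key frequency property
  have hkey : ∀ n : Fin m → ℤ, ∀ q : ℤ, freq AA n = (q:ℝ) → freq AA n = 0 := by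
    intro n q hq
    by_cases hq0 : q = 0
    · rw [hq, hq0]
      simp
    · exfalso
      apply hspan
      have hmem : freq AA n ∈ Submodule.span ℚ (α '' Set.Icc 1 m) := by
        unfold freq
        apply Submodule.sum_mem
        intro i _
        have hii' := i.isLt
        have hx : AA i ∈ α '' Set.Icc 1 m := by
          refine ⟨1 + (i:ℕ), ⟨by omega, by omega⟩, rfl⟩
        have hii := i.isLt
        have h1 : ((n i : ℚ)) • AA i ∈ Submodule.span ℚ (α '' Set.Icc 1 m) :=
          Submodule.smul_mem _ _ (Submodule.subset_span hx)
        have h2 : ((n i : ℚ)) • AA i = ((n i : ℤ):ℝ) * AA i := by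
          rw [Rat.smul_def]
          push_cast
          ring
        rwa [h2] at h1
      have h2 := Submodule.smul_mem (Submodule.span ℚ (α '' Set.Icc 1 m)) ((q:ℚ)⁻¹) hmem
      have h3 : ((q:ℚ)⁻¹ : ℚ) • freq AA n = 1 := by
        rw [hq, Rat.smul_def]
        push_cast
        rw [inv_mul_cancel₀ (by exact_mod_cast hq0)]
      rwa [h3] at h2
  -- boundedness
  set M : ℝ := ∑ j ∈ Finset.Icc 1 m, |b j| with hMdef
  have hbound : ∀ x : ℝ, -M ≤ ∑ j ∈ Finset.Icc 1 m, b j * Real.cos (2 * Real.pi * α j * x) := by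
    intro x
    rw [hMdef, ← Finset.sum_neg_distrib]
    apply Finset.sum_le_sum
    intro j _
    have h1 : |b j * Real.cos (2 * Real.pi * α j * x)| ≤ |b j| := by
      rw [abs_mul]
      calc |b j| * |Real.cos (2 * Real.pi * α j * x)| ≤ |b j| * 1 :=
            mul_le_mul_of_nonneg_left (Real.abs_cos_le_one _) (abs_nonneg _)
        _ = |b j| := mul_one _
    have h2 := neg_abs_le (b j * Real.cos (2 * Real.pi * α j * x))
    linarith
  have hbddZ : BddBelow (Set.range fun k : ℤ =>
      ∑ j ∈ Finset.Icc 1 m, b j * Real.cos (2 * Real.pi * α j * (k:ℝ))) := by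
    refine ⟨-M, ?_⟩
    rintro y ⟨k, rfl⟩
    exact hbound _
  have hbddR : BddBelow (Set.range fun x : ℝ =>
      ∑ j ∈ Finset.Icc 1 m, b j * Real.cos (2 * Real.pi * α j * x)) := by
    refine ⟨-M, ?_⟩
    rintro y ⟨x, rfl⟩
    exact hbound _
  apply le_antisymm
  · apply le_ciInf
    intro t
    apply le_of_forall_pos_le_add
    intro ε hε
    have hc : ∀ k : ℤ, (⨅ k : ℤ, ∑ j ∈ Finset.Icc 1 m, b j * Real.cos (2 * Real.pi * α j * (k:ℝ)))
        ≤ ∑ i : Fin m, BB i * Real.cos (2 * Real.pi * AA i * (k:ℝ)) := by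
      intro k
      rw [← hsum ((k:ℤ):ℝ)]
      exact ciInf_le hbddZ k
    have := BT_main m AA BB hkey t _ hc ε hε
    rw [← hsum t] at this
    exact this
  · apply le_ciInf
    intro k
    exact ciInf_le hbddR ((k:ℤ):ℝ)
end

section
/- Let α_1, …, α_n be real numbers such that the ℚ-linear span of α_1, …, α_n does not contain 1, let t₀ be a real number, and let δ > 0. Then there exist integers k, k_1, …, k_n such that |α_j t₀ − α_j k − k_j| < δ for j = 1, …, n. -/
open Real Finset Submodule

section aux

variable {n : ℕ}

local notation "E" => EuclideanSpace ℝ (Fin n)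

private lemma coord_le_norm (y : EuclideanSpace ℝ (Fin n)) (i : Fin n) : |y i| ≤ ‖y‖ := by
  rw [EuclideanSpace.norm_eq]
  have h : |y i| = Real.sqrt (‖y i‖ ^ 2) := by
    rw [Real.sqrt_sq_eq_abs, Real.norm_eq_abs, abs_abs]
  rw [h]
  apply Real.sqrt_le_sqrt
  exact Finset.single_le_sum (f := fun j => ‖y j‖ ^ 2) (fun j _ => sq_nonneg _) (Finset.mem_univ i)

variable (G : AddSubgroup (EuclideanSpace ℝ (Fin n)))

/-- The subspace of directions entirely contained in `G`. -/
private def dirSub : Submodule ℝ (EuclideanSpace ℝ (Fin n)) where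
  carrier := {x | ∀ t : ℝ, t • x ∈ G}
  add_mem' := by
    intro x y hx hy t
    simpa [smul_add] using G.add_mem (hx t) (hy t)
  zero_mem' := by intro t; simpa using G.zero_mem
  smul_mem' := by
    intro c x hx t
    simpa [smul_smul] using hx (t * c)

private lemma line_mem (hG : IsClosed (G : Set (EuclideanSpace ℝ (Fin n)))) {g : ℕ → EuclideanSpace ℝ (Fin n)} (hg : ∀ k, g k ∈ G)
    (hne : ∀ k, g k ≠ 0) (hlim : Filter.Tendsto g Filter.atTop (nhds 0))
    {u : EuclideanSpace ℝ (Fin n)}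
    (hu : Filter.Tendsto (fun k => ‖g k‖⁻¹ • g k) Filter.atTop (nhds u)) :
    u ∈ dirSub G := by
  intro t
  have hnorm : ∀ k, (0:ℝ) < ‖g k‖ := fun k => norm_pos_iff.2 (hne k)
  have hnlim : Filter.Tendsto (fun k => ‖g k‖) Filter.atTop (nhds 0) := by
    simpa using hlim.norm
  set m : ℕ → ℤ := fun k => ⌊t / ‖g k‖⌋ with hm
  have hmem : ∀ k, ((m k : ℝ) * ‖g k‖) • (‖g k‖⁻¹ • g k) ∈ G := by
    intro k
    have : ((m k : ℝ) * ‖g k‖) • (‖g k‖⁻¹ • g k) = m k • g k := by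
      rw [smul_smul, ← Int.cast_smul_eq_zsmul ℝ]
      congr 1
      field_simp [(hnorm k).ne']
    rw [this]
    exact G.zsmul_mem (hg k) _
  have hc : Filter.Tendsto (fun k => (m k : ℝ) * ‖g k‖) Filter.atTop (nhds t) := by
    have hdist : ∀ k, |(m k : ℝ) * ‖g k‖ - t| ≤ ‖g k‖ := by
      intro k
      have h1 : |(m k : ℝ) - t / ‖g k‖| ≤ 1 := by
        rw [abs_sub_comm]
        have hf := Int.fract_nonneg (t / ‖g k‖)
        have hf2 := Int.fract_lt_one (t / ‖g k‖)
        rw [Int.fract] at hf hf2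
        rw [abs_le]
        constructor <;> linarith
      have : (m k : ℝ) * ‖g k‖ - t = ((m k : ℝ) - t / ‖g k‖) * ‖g k‖ := by
        rw [sub_mul, div_mul_cancel₀ _ (hnorm k).ne']
      rw [this, abs_mul, abs_of_pos (hnorm k)]
      nlinarith [abs_nonneg ((m k : ℝ) - t / ‖g k‖), hnorm k]
    have h0 : Filter.Tendsto (fun k => (m k : ℝ) * ‖g k‖ - t) Filter.atTop (nhds 0) := by
      apply squeeze_zero_norm hdist hnlim
    have := h0.add_const t
    simpa using this
  have := hG.mem_of_tendsto (hc.smul hu) (Filter.Eventually.of_forall hmem)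
  exact this

private lemma exists_eps (hG : IsClosed (G : Set (EuclideanSpace ℝ (Fin n)))) :
    ∃ ε > 0, ∀ x ∈ G, x ∈ (dirSub G)ᗮ → ‖x‖ < ε → x = 0 := by
  by_contra h
  push_neg at h
  have hseq : ∀ k : ℕ, ∃ x, x ∈ G ∧ x ∈ (dirSub G)ᗮ ∧ ‖x‖ < 1/(k+1) ∧ x ≠ 0 := by
    intro k
    obtain ⟨x, hx1, hx2, hx3, hx4⟩ := h (1/(k+1)) (by positivity)
    exact ⟨x, hx1, hx2, hx3, hx4⟩
  choose x hx1 hx2 hx3 hx4 using hseq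
  have hnorm : ∀ k, (0:ℝ) < ‖x k‖ := fun k => norm_pos_iff.2 (hx4 k)
  have hmemsphere : ∀ k, ‖x k‖⁻¹ • x k ∈ Metric.sphere (0 : EuclideanSpace ℝ (Fin n)) 1 := by
    intro k
    simp [norm_smul, abs_of_pos (inv_pos.2 (hnorm k)), inv_mul_cancel₀ (hnorm k).ne']
  obtain ⟨u, humem, φ, hφ, hulim⟩ :=
    (isCompact_sphere (0 : EuclideanSpace ℝ (Fin n)) 1).tendsto_subseq hmemsphere
  have hxlim : Filter.Tendsto (fun k => x (φ k)) Filter.atTop (nhds 0) := by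
    apply squeeze_zero_norm (fun k => (hx3 (φ k)).le)
    have : Filter.Tendsto (fun k : ℕ => 1/((k:ℝ)+1)) Filter.atTop (nhds 0) :=
      tendsto_one_div_add_atTop_nhds_zero_nat
    exact this.comp hφ.tendsto_atTop
  have huV : u ∈ dirSub G :=
    line_mem G hG (fun k => hx1 (φ k)) (fun k => hx4 (φ k)) hxlim hulim
  have huVperp : u ∈ (dirSub G)ᗮ := by
    have hclosed : IsClosed ((dirSub G)ᗮ : Set (EuclideanSpace ℝ (Fin n))) :=
      Submodule.closed_of_finiteDimensional _
    apply hclosed.mem_of_tendsto hulim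
    apply Filter.Eventually.of_forall
    intro k
    exact Submodule.smul_mem _ _ (hx2 (φ k))
  have : u = 0 := by
    have := (Submodule.orthogonal_disjoint (dirSub G)).le_bot ⟨huV, huVperp⟩
    simpa using this
  rw [this] at humem
  simp at humem

end aux


private lemma mem_dirSub {n : ℕ} (G : AddSubgroup (EuclideanSpace ℝ (Fin n)))
    (hG : IsClosed (G : Set (EuclideanSpace ℝ (Fin n))))
    (hbasis : ∀ i : Fin n, ((EuclideanSpace.basisFun (Fin n) ℝ) i : EuclideanSpace ℝ (Fin n)) ∈ G)
    (a : EuclideanSpace ℝ (Fin n)) (ha : a ∈ G)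
    (hfun : ∀ m : Fin n → ℤ, ∀ c : ℤ, (∑ i, (m i : ℝ) * a i) = (c : ℝ) → c = 0) :
    a ∈ dirSub G := by
  classical
  set V : Submodule ℝ (EuclideanSpace ℝ (Fin n)) := dirSub G with hV
  set W : Submodule ℝ (EuclideanSpace ℝ (Fin n)) := Vᗮ with hW
  have hVG : ∀ x ∈ V, x ∈ G := fun x hx => by simpa using hx 1
  set p : EuclideanSpace ℝ (Fin n) →L[ℝ] W := orthogonalProjection W with hp
  have hsub : ∀ x : EuclideanSpace ℝ (Fin n), x - (p x : EuclideanSpace ℝ (Fin n)) ∈ V := by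
    intro x
    have h : x - (p x : EuclideanSpace ℝ (Fin n)) ∈ Wᗮ := Submodule.sub_starProjection_mem_orthogonal (K := W) x
    have hWperp : Wᗮ = V := by rw [hW, Submodule.orthogonal_orthogonal]
    rw [hWperp] at h
    exact h
  have hpG : ∀ x ∈ G, ((p x : EuclideanSpace ℝ (Fin n))) ∈ G := by
    intro x hx
    have h1 : x - (p x : EuclideanSpace ℝ (Fin n)) ∈ G := hVG _ (hsub x)
    have := G.sub_mem hx h1
    simpa using this
  set L : Submodule ℤ W := AddSubgroup.toIntSubmodule (G.comap W.subtype.toAddMonoidHom) with hL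
  have hLmem : ∀ x : W, x ∈ L ↔ (x : EuclideanSpace ℝ (Fin n)) ∈ G := fun x => Iff.rfl
  -- discreteness
  obtain ⟨ε, hε, hsep⟩ := exists_eps G hG
  haveI : DiscreteTopology L := by
    apply discreteTopology_of_isOpen_singleton_zero
    have : ({0} : Set L) = (Subtype.val : L → W) ⁻¹' (Metric.ball (0 : W) ε) := by
      ext x
      simp only [Set.mem_singleton_iff, Set.mem_preimage, Metric.mem_ball, dist_zero_right]
      constructor
      · rintro rfl; simpa using hε
      · intro hx
        have hxG : ((x : W) : EuclideanSpace ℝ (Fin n)) ∈ G := (hLmem _).1 x.2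
        have hxW : ((x : W) : EuclideanSpace ℝ (Fin n)) ∈ W := (x : W).2
        have : ((x : W) : EuclideanSpace ℝ (Fin n)) = 0 := hsep _ hxG hxW (by simpa using hx)
        ext1
        ext1
        simpa using this
    rw [this]
    exact (Metric.isOpen_ball).preimage continuous_subtype_val
  have hsurj : ∀ w : W, p (w : EuclideanSpace ℝ (Fin n)) = w := fun w =>
    orthogonalProjection_mem_subspace_eq_self w
  set b0 : Module.Basis (Fin n) ℝ (EuclideanSpace ℝ (Fin n)) := (EuclideanSpace.basisFun (Fin n) ℝ).toBasis
    with hb0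
  have hpL : ∀ x ∈ G, p x ∈ L := by
    intro x hx
    rw [hLmem]
    exact hpG x hx
  haveI : IsZLattice ℝ L := by
    constructor
    rw [eq_top_iff]
    rintro w -
    have h1 : w ∈ Submodule.map (p.toLinearMap) (Submodule.span ℝ (Set.range b0)) := by
      rw [b0.span_eq]
      exact ⟨(w : EuclideanSpace ℝ (Fin n)), trivial, hsurj w⟩
    rw [Submodule.map_span] at h1
    refine Submodule.span_mono ?_ h1
    rintro _ ⟨_, ⟨i, rfl⟩, rfl⟩
    have : (b0 i : EuclideanSpace ℝ (Fin n)) ∈ G := by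
      rw [hb0]
      simpa using hbasis i
    exact hpL _ this
  -- conclude a ∈ V, i.e. p a = 0
  have hpa : p a = 0 := by
    by_contra hpa
    haveI : Module.Free ℤ L := inferInstance
    haveI : Module.Finite ℤ L := inferInstance
    set ι := Module.Free.ChooseBasisIndex ℤ L with hι
    set b₀ : Module.Basis ι ℤ L := Module.Free.chooseBasis ℤ L with hb₀
    set b : Module.Basis ι ℝ W := Module.Basis.ofZLatticeBasis ℝ L b₀ with hb
    have hint : ∀ x ∈ L, ∀ i, ∃ z : ℤ, (z : ℝ) = b.repr x i := by
      intro x hx i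
      have hx' : x ∈ Submodule.span ℤ (Set.range ⇑b) := by
        rw [Module.Basis.ofZLatticeBasis_span]; exact hx
      obtain ⟨z, hz⟩ := (Module.Basis.mem_span_iff_repr_mem ℤ b x).1 hx' i
      exact ⟨z, hz⟩
    have hpaL : p a ∈ L := hpL a ha
    obtain ⟨i₀, hi₀⟩ : ∃ i₀, b.repr (p a) i₀ ≠ 0 := by
      by_contra hcon
      push_neg at hcon
      exact hpa ((b.forall_coord_eq_zero_iff).1 (fun i => by simpa [Module.Basis.coord_apply] using hcon i))
    set φ : EuclideanSpace ℝ (Fin n) →ₗ[ℝ] ℝ :=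
      (Finsupp.lapply i₀) ∘ₗ (b.repr : W ≃ₗ[ℝ] (ι →₀ ℝ)).toLinearMap ∘ₗ p.toLinearMap with hφ
    have hφdef : ∀ x, φ x = b.repr (p x) i₀ := fun x => rfl
    choose m hm using fun i : Fin n => hint _ (hpL _ ((by simpa [hb0] using hbasis i :
      (b0 i : EuclideanSpace ℝ (Fin n)) ∈ G))) i₀
    obtain ⟨c, hc⟩ := hint _ hpaL i₀
    have hcne : c ≠ 0 := by
      intro h
      rw [h] at hc
      exact hi₀ (by simpa using hc.symm)
    have hsum : a = ∑ i, a i • b0 i := by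
      conv_lhs => rw [← b0.sum_repr a]
      refine Finset.sum_congr rfl fun i _ => ?_
      rw [hb0, OrthonormalBasis.coe_toBasis_repr_apply, EuclideanSpace.basisFun_repr]
    have hφa : φ a = ∑ i, (m i : ℝ) * a i := by
      conv_lhs => rw [hsum]
      rw [map_sum]
      refine Finset.sum_congr rfl fun i _ => ?_
      rw [map_smul, smul_eq_mul, hφdef, ← hm i, mul_comm]
    have : (∑ i, (m i : ℝ) * a i) = (c : ℝ) := by
      rw [← hφa, hφdef, ← hc]
    exact hcne (hfun m c this)
  have h : a ∈ W ᗮ := Submodule.orthogonalProjectionOnto_eq_zero_iff.1 hpa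
  have hWperp : Wᗮ = V := by rw [hW, Submodule.orthogonal_orthogonal]
  rw [hWperp] at h
  exact h

/-- **Lemma 3 (Beukers–Tijdeman): a consequence of Kronecker's theorem.**
Let `α 1, …, α n` be real numbers whose `ℚ`-linear span does not contain `1`, let `t₀` be
real and `δ > 0`.  Then there exist integers `k, k 1, …, k n` with
`|α j * t₀ - α j * k - k j| < δ` for `j = 1, …, n`. -/
theorem kronecker_approximation_consequence
    (n : ℕ) (hn : 1 ≤ n) (α : ℕ → ℝ)
    (hspan : (1 : ℝ) ∉ Submodule.span ℚ (α '' Set.Icc 1 n))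
    (t₀ : ℝ) (δ : ℝ) (hδ : 0 < δ) :
    ∃ (k : ℤ) (K : ℕ → ℤ), ∀ j ∈ Finset.Icc 1 n,
      |α j * t₀ - α j * (k : ℝ) - (K j : ℝ)| < δ := by
  classical
  set a : EuclideanSpace ℝ (Fin n) := WithLp.toLp 2 (fun i : Fin n => α ((i : ℕ) + 1)) with ha
  set b0 : Module.Basis (Fin n) ℝ (EuclideanSpace ℝ (Fin n)) :=
    (EuclideanSpace.basisFun (Fin n) ℝ).toBasis with hb0
  set M : Submodule ℤ (EuclideanSpace ℝ (Fin n)) :=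
    Submodule.span ℤ (insert a (Set.range ⇑b0)) with hM
  set G : AddSubgroup (EuclideanSpace ℝ (Fin n)) := M.toAddSubgroup.topologicalClosure with hGdef
  have hG : IsClosed (G : Set (EuclideanSpace ℝ (Fin n))) :=
    AddSubgroup.isClosed_topologicalClosure _
  have hMG : ∀ x ∈ M, x ∈ G := fun x hx => AddSubgroup.le_topologicalClosure _ hx
  have hbasis : ∀ i : Fin n, ((EuclideanSpace.basisFun (Fin n) ℝ) i) ∈ G := by
    intro i
    refine hMG _ (Submodule.subset_span (Set.mem_insert_iff.2 (Or.inr ⟨i, ?_⟩)))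
    rw [hb0, OrthonormalBasis.coe_toBasis]
  have haG : a ∈ G := hMG _ (Submodule.subset_span (Set.mem_insert _ _))
  have hfun : ∀ m : Fin n → ℤ, ∀ c : ℤ, (∑ i, (m i : ℝ) * a i) = (c : ℝ) → c = 0 := by
    intro m c hsum
    by_contra hc
    apply hspan
    have h1 : (1 : ℝ) = ∑ i : Fin n, ((m i / c : ℚ) : ℝ) * α ((i : ℕ) + 1) := by
      have h2 : ∑ i : Fin n, ((m i / c : ℚ) : ℝ) * α ((i : ℕ) + 1)
          = (c : ℝ)⁻¹ * ∑ i, (m i : ℝ) * a i := by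
        rw [Finset.mul_sum]
        refine Finset.sum_congr rfl fun i _ => ?_
        have hai : a i = α ((i : ℕ) + 1) := rfl
        rw [hai]
        push_cast
        ring
      rw [h2, hsum]
      have : (c : ℝ) ≠ 0 := Int.cast_ne_zero.2 hc
      field_simp
    rw [h1]
    refine Submodule.sum_mem _ fun i _ => ?_
    have h3 : ((m i / c : ℚ) : ℝ) * α ((i : ℕ) + 1)
        = (m i / c : ℚ) • α ((i : ℕ) + 1) := (Rat.smul_def _ _).symm
    rw [h3]
    refine Submodule.smul_mem _ _ (Submodule.subset_span ⟨(i : ℕ) + 1, ⟨?_, ?_⟩, rfl⟩)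
    · omega
    · have := i.isLt; omega
  have hmem : t₀ • a ∈ G := mem_dirSub G hG hbasis a haG hfun t₀
  have hclose : t₀ • a ∈ closure (M : Set (EuclideanSpace ℝ (Fin n))) := hmem
  obtain ⟨y, hyM, hy⟩ := Metric.mem_closure_iff.1 hclose δ hδ
  have hyM' : y ∈ Submodule.span ℤ (insert a (Set.range ⇑b0)) := hyM
  rw [Submodule.mem_span_insert] at hyM'
  obtain ⟨k, z, hz, rfl⟩ := hyM' 
  have hzc : ∀ i : Fin n, ∃ K : ℤ, (K : ℝ) = z i := by
    intro i
    obtain ⟨K, hK⟩ := (Module.Basis.mem_span_iff_repr_mem ℤ b0 z).1 hz i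
    refine ⟨K, ?_⟩
    rw [hb0, OrthonormalBasis.coe_toBasis_repr_apply, EuclideanSpace.basisFun_repr] at hK
    exact hK
  choose Kf hKf using hzc
  refine ⟨k, fun j => if h : j - 1 < n then Kf ⟨j - 1, h⟩ else 0, ?_⟩
  intro j hj
  rw [Finset.mem_Icc] at hj
  have hjn : j - 1 < n := by omega
  simp only [dif_pos hjn]
  set i : Fin n := ⟨j - 1, hjn⟩ with hidef
  have hji : (i : ℕ) + 1 = j := by simp only [hidef]; omega
  have hcoord : |(t₀ • a - (k • a + z)) i| ≤ ‖t₀ • a - (k • a + z)‖ := coord_le_norm _ i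
  have hdist : ‖t₀ • a - (k • a + z)‖ < δ := by
    rw [← dist_eq_norm]; exact hy
  have hksmul : (k • a : EuclideanSpace ℝ (Fin n)) = ((k : ℝ)) • a :=
    (Int.cast_smul_eq_zsmul ℝ k a).symm
  have hval : (t₀ • a - (k • a + z)) i = α j * t₀ - α j * (k : ℝ) - (Kf i : ℝ) := by
    have hai : a i = α j := by rw [show a i = α ((i : ℕ) + 1) from rfl, hji]
    have h5 : (t₀ • a - (k • a + z)) i = t₀ * a i - ((k : ℝ) * a i + z i) := by
      rw [hksmul]
      simp [PiLp.sub_apply, PiLp.add_apply, PiLp.smul_apply, smul_eq_mul]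
    rw [h5, hai, ← hKf i]
    ring
  rw [← hval]
  exact lt_of_le_of_lt hcoord hdist
end
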